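/- arXiv:2509.05850 — 5 statements merged into one kernel-verified Lean document; each statement's English description precedes it below -/
import Mathlib

section
/- For a submodule C ⊆ R^n over an Artinian local Frobenius ring R, the free rank of C equals dim_K ρ(C), where ρ: R^n → K^n is reduction modulo m, and also equals the maximal θ such that there exists an R-linear injection R^θ ↪ C. -/
open IsLocalRing

/-- Length of a module, as a natural number: the Krull dimension of its submodule lattice
(i.e. the supremum of lengths of chains of submodules). -/
noncomputable def lenN (R M : Type*) [CommRing R] [AddCommGroup M] [Module R M] : ℕ :=
  (WithBot.unbotD 0 (Order.krullDim (Submodule R M))).toNat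

/-- The socle of a module over a local ring: elements killed by the maximal ideal. -/
abbrev socle (R M : Type*) [CommRing R] [IsLocalRing R] [AddCommGroup M] [Module R M] :
    Submodule R M :=
  Submodule.torsionBySet R M (maximalIdeal R)

/-- type(M) = dim_K soc(M), the dimension of the socle over the residue field K = R/m. -/
noncomputable def typeOf (R M : Type*) [CommRing R] [IsLocalRing R] [AddCommGroup M]
    [Module R M] : ℕ :=
  Module.finrank (R ⧸ maximalIdeal R) (socle R M)

/-- Minimal number of generators of a module. -/
noncomputable def mu (R M : Type*) [CommRing R] [AddCommGroup M] [Module R M] : ℕ :=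
  sInf {k : ℕ | ∃ s : Finset M, s.card = k ∧ Submodule.span R (s : Set M) = ⊤}

/-- Free rank: the largest r admitting an R-linear surjection M → R^r. -/
noncomputable def freeRank (R M : Type*) [CommRing R] [AddCommGroup M] [Module R M] : ℕ :=
  sSup {r : ℕ | ∃ f : M →ₗ[R] (Fin r → R), Function.Surjective f}

/-- An Artinian local ring is Frobenius if its socle is 1-dimensional over the residue field. -/
def IsFrobenius (R : Type*) [CommRing R] [IsLocalRing R] : Prop :=
  typeOf R R = 1

/-- The orthogonal (dual) code with respect to the standard bilinear form on R^n. -/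
def dualCode {R : Type*} [CommRing R] {n : ℕ} (C : Submodule R (Fin n → R)) :
    Submodule R (Fin n → R) where
  carrier := {v | ∀ w ∈ C, ∑ i, v i * w i = 0}
  zero_mem' := by intro w _; simp
  add_mem' := by
    intro a b ha hb w hw
    simpa [add_mul, Finset.sum_add_distrib] using by rw [ha w hw, hb w hw, add_zero]
  smul_mem' := by
    intro c a ha w hw
    simp only [Set.mem_setOf_eq] at ha ⊢
    simp [Pi.smul_apply, smul_eq_mul, mul_assoc, ← Finset.mul_sum, ha w hw]

/-- The submodule H_A of vectors of R^n supported on a set A of coordinates. -/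
def suppCode (R : Type*) [CommRing R] {n : ℕ} (A : Finset (Fin n)) :
    Submodule R (Fin n → R) where
  carrier := {v | ∀ i, i ∉ A → v i = 0}
  zero_mem' := by intro i _; simp
  add_mem' := by intro a b ha hb i hi; simp [ha i hi, hb i hi]
  smul_mem' := by intro c a ha i hi; simp [ha i hi]

open Classical in
/-- Hamming weight of a vector. -/
noncomputable def wt {R : Type*} [CommRing R] {n : ℕ} (v : Fin n → R) : ℕ :=
  (Finset.univ.filter (fun i => v i ≠ 0)).card

/-- Minimum Hamming distance (= minimum weight of a nonzero codeword) of a code. -/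
noncomputable def dH {R : Type*} [CommRing R] {n : ℕ} (C : Submodule R (Fin n → R)) : ℕ :=
  sInf {w : ℕ | ∃ v ∈ C, v ≠ 0 ∧ wt v = w}

/-- The coordinatewise reduction R^n → K^n modulo the maximal ideal. -/
def rho (R : Type*) [CommRing R] [IsLocalRing R] {n : ℕ} (v : Fin n → R) :
    Fin n → R ⧸ maximalIdeal R :=
  fun i => Ideal.Quotient.mk (maximalIdeal R) (v i)

-- existence of socle annihilator
lemma exists_ann (R : Type*) [CommRing R] [IsLocalRing R] [IsArtinianRing R] :
    ∃ x : R, x ≠ 0 ∧ ∀ y ∈ maximalIdeal R, x * y = 0 := by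
  classical
  obtain ⟨t, ht⟩ := IsArtinianRing.isNilpotent_jacobson_bot (R := R)
  rw [IsLocalRing.jacobson_eq_maximalIdeal ⊥ bot_ne_top] at ht
  have h0 : ∃ k, maximalIdeal R ^ k = ⊥ := ⟨t, ht⟩
  have htf := Nat.find_spec h0
  set t0 := Nat.find h0 with ht0
  have ht0ne : t0 ≠ 0 := by
    intro h
    rw [h, pow_zero, Ideal.one_eq_top] at htf
    exact one_ne_zero ((Submodule.eq_bot_iff _).mp htf 1 Submodule.mem_top)
  obtain ⟨k, hk⟩ := Nat.exists_eq_succ_of_ne_zero ht0ne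
  have hkne : maximalIdeal R ^ k ≠ ⊥ := Nat.find_min h0 (by omega)
  obtain ⟨x, hxm, hxne⟩ := Submodule.exists_mem_ne_zero_of_ne_bot hkne
  refine ⟨x, hxne, fun y hy => ?_⟩
  have : x * y ∈ maximalIdeal R ^ t0 := by
    rw [hk, pow_succ]
    exact Ideal.mul_mem_mul hxm hy
  rwa [htf, Submodule.mem_bot] at this

-- independence from injection
lemma indep_of_inj {R : Type*} [CommRing R] [IsLocalRing R] [IsArtinianRing R] {θ n : ℕ}
    (j : (Fin θ → R) →ₗ[R] (Fin n → R)) (hj : Function.Injective j) :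
    LinearIndependent (R ⧸ maximalIdeal R) (fun i => rho R (j (Pi.single i 1))) := by
  obtain ⟨x, hx0, hx⟩ := exists_ann R
  rw [Fintype.linearIndependent_iff]
  intro a ha
  choose b hb using fun i => Ideal.Quotient.mk_surjective (I := maximalIdeal R) (a i)
  have hjb : ∀ k, (j b) k ∈ maximalIdeal R := by
    intro k
    have h1 : j b = ∑ i, b i • j (Pi.single i 1) := by
      have hb' : b = ∑ i, b i • (Pi.single i 1 : Fin θ → R) := by
        ext l
        simp [Pi.single_apply]
      conv_lhs => rw [hb']
      simp [map_sum, map_smul]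
    have h2 : Ideal.Quotient.mk (maximalIdeal R) ((j b) k) = 0 := by
      rw [h1]
      have hk := congrFun ha k
      simp only [Finset.sum_apply, Pi.smul_apply, Pi.zero_apply, smul_eq_mul] at hk
      simp only [Finset.sum_apply, Pi.smul_apply, smul_eq_mul, map_sum, map_mul, hb]
      simpa [rho] using hk
    rwa [Ideal.Quotient.eq_zero_iff_mem] at h2
  have hxb : x • b = 0 := by
    apply hj
    rw [map_smul, map_zero]
    funext k
    exact hx _ (hjb k)
  intro i
  have hxbi : x * b i = 0 := congrFun hxb i
  have hbm : b i ∈ maximalIdeal R := by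
    by_contra h
    have hu : IsUnit (b i) := by
      rwa [mem_maximalIdeal, mem_nonunits_iff, not_not] at h
    obtain ⟨u, hu⟩ := hu
    apply hx0
    calc x = x * (b i * ↑u⁻¹) := by rw [← hu]; simp
    _ = x * b i * ↑u⁻¹ := by ring
    _ = 0 := by rw [hxbi, zero_mul]
  rw [← hb i, Ideal.Quotient.eq_zero_iff_mem]
  exact hbm

lemma exists_surj {R : Type*} [CommRing R] [IsLocalRing R] {n r : ℕ}
    (C : Submodule R (Fin n → R)) (v : Fin r → Fin n → R) (hv : ∀ i, v i ∈ C)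
    (hind : LinearIndependent (R ⧸ maximalIdeal R) (fun i => rho R (v i))) :
    ∃ f : C →ₗ[R] (Fin r → R), Function.Surjective f := by
  classical
  letI : Field (R ⧸ maximalIdeal R) := Ideal.Quotient.field _
  set mk := Ideal.Quotient.mk (maximalIdeal R)
  set u : Fin r → (Fin n → R ⧸ maximalIdeal R) := fun i => rho R (v i) with hu
  -- the K-linear map sending e_i to u i
  set T : (Fin r → R ⧸ maximalIdeal R) →ₗ[R ⧸ maximalIdeal R] (Fin n → R ⧸ maximalIdeal R) := Fintype.linearCombination (R ⧸ maximalIdeal R) u with hT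
  have hTapp : ∀ c, T c = ∑ i, c i • u i := fun c => rfl
  have hker : LinearMap.ker T = ⊥ := by
    rw [LinearMap.ker_eq_bot']
    intro c hc
    exact funext (Fintype.linearIndependent_iff.mp hind c hc)
  obtain ⟨g, hg⟩ := LinearMap.exists_leftInverse_of_injective (K := R ⧸ maximalIdeal R) (V := Fin r → R ⧸ maximalIdeal R) (V' := Fin n → R ⧸ maximalIdeal R) T hker
  have hgu : ∀ i, g (u i) = Pi.single i 1 := by
    intro i
    have h1 : T (Pi.single i 1) = u i := by
      rw [hTapp]
      simp [Pi.single_apply]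
    rw [← h1]
    exact congrFun (congrArg (fun h => h.toFun) hg) (Pi.single i 1) |>.trans rfl
  -- lift g to an R-linear map
  choose G hG using fun (k : Fin r) (l : Fin n) =>
    Ideal.Quotient.mk_surjective (I := maximalIdeal R) (g (Pi.single l 1) k)
  set A : (Fin n → R) →ₗ[R] (Fin r → R) := (Matrix.of G).mulVecLin with hA
  have hAcompat : ∀ (w : Fin n → R) (k : Fin r), mk ((A w) k) = g (rho R w) k := by
    intro w k
    have h2 : rho R w = ∑ l, rho R w l • (Pi.single l 1 : Fin n → R ⧸ maximalIdeal R) := by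
      ext l'
      simp [Pi.single_apply]
    have h3 : g (rho R w) k = ∑ l, mk (w l) * g (Pi.single l 1) k := by
      rw [h2, map_sum]
      simp only [map_smul, Finset.sum_apply, Pi.smul_apply, smul_eq_mul]
      rfl
    rw [h3]
    simp only [hA, Matrix.mulVecLin_apply, Matrix.mulVec, dotProduct, Matrix.of_apply,
      map_sum, map_mul, hG]
    exact Finset.sum_congr rfl fun l _ => by rw [mul_comm]; exact congrArg (mk (w l) * ·) (hG k l)
  set B : Matrix (Fin r) (Fin r) R := Matrix.of fun k i => (A (v i)) k with hB
  have hBmk : ∀ k i, mk (B k i) = if k = i then 1 else 0 := by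
    intro k i
    have := hAcompat (v i) k
    rw [hB] at *
    simp only [Matrix.of_apply] at *
    rw [this, hgu i, Pi.single_apply]
  have hdet : IsUnit B.det := by
    have hmap : B.map (Ideal.Quotient.mk (maximalIdeal R)) = 1 := by
      ext k i
      rw [Matrix.map_apply, hBmk, Matrix.one_apply]
    have hdet1 : mk B.det = 1 := by
      have h := (Ideal.Quotient.mk (maximalIdeal R)).map_det B
      rw [RingHom.mapMatrix_apply, hmap, Matrix.det_one] at h
      exact h
    by_contra h
    have : B.det ∈ maximalIdeal R := by rwa [mem_maximalIdeal, mem_nonunits_iff]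
    rw [← Ideal.Quotient.eq_zero_iff_mem] at this
    rw [this] at hdet1
    exact zero_ne_one hdet1
  have hBinv : B * B⁻¹ = 1 := Matrix.mul_nonsing_inv B hdet
  refine ⟨A.comp C.subtype, fun y => ?_⟩
  set w : Fin r → R := B⁻¹.mulVec y with hw
  have hcmem : (∑ i, w i • v i) ∈ C := Submodule.sum_mem C fun i _ => C.smul_mem _ (hv i)
  refine ⟨⟨∑ i, w i • v i, hcmem⟩, ?_⟩
  have hAc : A (∑ i, w i • v i) = B.mulVec w := by
    rw [map_sum]
    ext k
    simp only [Finset.sum_apply, map_smul, Pi.smul_apply, smul_eq_mul]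
    rw [Matrix.mulVec, dotProduct]
    exact Finset.sum_congr rfl fun i _ => by rw [hB]; simp [Matrix.of_apply, mul_comm]
  simp only [LinearMap.comp_apply, Submodule.subtype_apply]
  rw [hAc, hw, Matrix.mulVec_mulVec, hBinv, Matrix.one_mulVec]


/-- extraction of an independent family of size finrank from ρ(C) -/
lemma exists_indep_family (R : Type*) [CommRing R] [IsLocalRing R] {n : ℕ}
    (C : Submodule R (Fin n → R)) :
    ∃ c : Fin (Module.finrank (R ⧸ maximalIdeal R)
        (Submodule.span (R ⧸ maximalIdeal R) (rho R '' (C : Set (Fin n → R))))) →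
        (Fin n → R),
      (∀ i, c i ∈ C) ∧
        LinearIndependent (R ⧸ maximalIdeal R) (fun i => rho R (c i)) := by
  classical
  letI : Field (R ⧸ maximalIdeal R) := Ideal.Quotient.field _
  set d := Module.finrank (R ⧸ maximalIdeal R)
      (Submodule.span (R ⧸ maximalIdeal R) (rho R '' (C : Set (Fin n → R)))) with hd
  obtain ⟨b, hbsub, hbspan, hbind⟩ :=
    exists_linearIndependent (R ⧸ maximalIdeal R) (rho R '' (C : Set (Fin n → R)))
  have hfin : b.Finite := hbind.setFinite
  letI := hfin.fintype
  have hcard : Fintype.card b = d := by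
    rw [← Set.toFinset_card, hd, ← hbspan, finrank_span_set_eq_card hbind]
  let e := Fintype.equivFinOfCardEq hcard
  have hmem : ∀ i : Fin d, ((e.symm i : b) : Fin n → R ⧸ maximalIdeal R)
      ∈ rho R '' (C : Set (Fin n → R)) := fun i => hbsub (e.symm i).2
  choose c hcC hc using fun i => hmem i
  refine ⟨c, hcC, ?_⟩
  have heq : (fun i => rho R (c i)) =
      (fun x : b => (x : Fin n → R ⧸ maximalIdeal R)) ∘ e.symm := funext fun i => hc i
  rw [heq]
  exact hbind.comp e.symm e.symm.injective

lemma key_bound {R : Type*} [CommRing R] [IsLocalRing R] [IsArtinianRing R] {n θ : ℕ}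
    (C : Submodule R (Fin n → R)) (j : (Fin θ → R) →ₗ[R] C) (hj : Function.Injective j) :
    θ ≤ Module.finrank (R ⧸ maximalIdeal R)
      (Submodule.span (R ⧸ maximalIdeal R) (rho R '' (C : Set (Fin n → R)))) := by
  classical
  letI : Field (R ⧸ maximalIdeal R) := Ideal.Quotient.field _
  set V := Submodule.span (R ⧸ maximalIdeal R) (rho R '' (C : Set (Fin n → R))) with hV
  set j' : (Fin θ → R) →ₗ[R] (Fin n → R) := C.subtype.comp j with hj'
  have hj'inj : Function.Injective j' := by
    intro a b h
    exact hj (Subtype.ext h)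
  have hind := indep_of_inj j' hj'inj
  have hmem : ∀ i : Fin θ, rho R (j' (Pi.single i 1)) ∈ V := by
    intro i
    apply Submodule.subset_span
    exact ⟨j' (Pi.single i 1), (j (Pi.single i 1)).2, rfl⟩
  set w : Fin θ → V := fun i => ⟨rho R (j' (Pi.single i 1)), hmem i⟩ with hw
  have hwind : LinearIndependent (R ⧸ maximalIdeal R) w := by
    apply LinearIndependent.of_comp V.subtype
    convert hind
    rfl
  simpa using hwind.fintype_card_le_finrank

lemma split_inj {R : Type*} [CommRing R] {n r : ℕ} (C : Submodule R (Fin n → R))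
    (f : C →ₗ[R] (Fin r → R)) (hf : Function.Surjective f) :
    ∃ g : (Fin r → R) →ₗ[R] C, Function.Injective g := by
  obtain ⟨g, hg⟩ := f.exists_rightInverse_of_surjective (LinearMap.range_eq_top.mpr hf)
  refine ⟨g, fun a b h => ?_⟩
  have := congrArg f (congrArg id h)
  calc a = f (g a) := (congrFun (congrArg (fun h => h.toFun) hg) a).symm
  _ = f (g b) := by rw [h]
  _ = b := congrFun (congrArg (fun h => h.toFun) hg) b


/-- over a Frobenius ring, fr(C) = dim_K ρ(C) and fr(C) is the largest θ
admitting an R-linear injection R^θ ↪ C. -/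
theorem stmt9 (R : Type*) [CommRing R] [IsLocalRing R] [IsArtinianRing R]
    (hR : IsFrobenius R) {n : ℕ} (C : Submodule R (Fin n → R)) :
    freeRank R C =
        Module.finrank (R ⧸ maximalIdeal R)
          (Submodule.span (R ⧸ maximalIdeal R) (rho R '' (C : Set (Fin n → R)))) ∧
      freeRank R C =
        sSup {θ : ℕ | ∃ f : (Fin θ → R) →ₗ[R] C, Function.Injective f} := by
  classical
  set d := Module.finrank (R ⧸ maximalIdeal R)
      (Submodule.span (R ⧸ maximalIdeal R) (rho R '' (C : Set (Fin n → R)))) with hd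
  set S := {r : ℕ | ∃ f : C →ₗ[R] (Fin r → R), Function.Surjective f} with hS
  set I := {θ : ℕ | ∃ f : (Fin θ → R) →ₗ[R] C, Function.Injective f} with hI
  -- d is attained by a surjection
  have hdS : d ∈ S := by
    obtain ⟨c, hcC, hcind⟩ := exists_indep_family R C
    exact exists_surj C c hcC hcind
  -- every element of S is ≤ d (via splitting and key_bound)
  have hSsubI : ∀ r ∈ S, r ∈ I := by
    rintro r ⟨f, hf⟩
    obtain ⟨g, hg⟩ := split_inj C f hf
    exact ⟨g, hg⟩
  have hIle : ∀ θ ∈ I, θ ≤ d := by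
    rintro θ ⟨j, hj⟩
    exact key_bound C j hj
  have hSle : ∀ r ∈ S, r ≤ d := fun r hr => hIle r (hSsubI r hr)
  have hSne : S.Nonempty := by
    refine ⟨0, 0, fun y => ⟨0, ?_⟩⟩
    exact Subsingleton.elim _ _
  have hIne : I.Nonempty := by
    refine ⟨0, 0, fun a b h => Subsingleton.elim _ _⟩
  have h1 : freeRank R C = d := by
    refine le_antisymm (csSup_le hSne hSle) (le_csSup ⟨d, fun k hk => hSle k hk⟩ hdS)
  refine ⟨h1, ?_⟩
  rw [h1]
  exact (le_antisymm (csSup_le hIne hIle)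
    (le_csSup ⟨d, fun k hk => hIle k hk⟩ (hSsubI d hdS))).symm
end

section
/- Let R be an Artinian local Frobenius ring and C ⊆ R^n a submodule with C ∩ C^⊥ = 0 (an LCD code). Then C is a free R-module. -/
open IsLocalRing

section LCDauxSocle
open IsLocalRing
variable {R : Type*} [CommRing R]

lemma LCD_maxIdeal_nilpotent [IsLocalRing R] [IsArtinianRing R] :
    ∃ k, (maximalIdeal R) ^ k = ⊥ := by
  have h : IsNilpotent (maximalIdeal R) := by
    rw [← IsLocalRing.jacobson_eq_maximalIdeal (⊥ : Ideal R) bot_ne_top]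
    exact IsArtinianRing.isNilpotent_jacobson_bot
  exact h

lemma LCD_exists_smul_socle [IsLocalRing R] [IsArtinianRing R] {M : Type*} [AddCommGroup M]
    [Module R M] (x : M) (hx : x ≠ 0) :
    ∃ r : R, r • x ≠ 0 ∧ ∀ s ∈ maximalIdeal R, s • (r • x) = 0 := by
  obtain ⟨k, hk⟩ := LCD_maxIdeal_nilpotent (R := R)
  have hP : ∃ j, ∀ r ∈ (maximalIdeal R) ^ j, r • x = 0 := by
    refine ⟨k, fun r hr => ?_⟩
    rw [hk] at hr
    simp [(Ideal.mem_bot).1 hr]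
  classical
  let j := Nat.find hP
  have hj : ∀ r ∈ (maximalIdeal R) ^ j, r • x = 0 := Nat.find_spec hP
  have hj0 : j ≠ 0 := by
    intro h0
    have : (1:R) • x = 0 := hj 1 (by rw [h0]; simp)
    simp at this
    exact hx this
  have hlt : ¬ ∀ r ∈ (maximalIdeal R) ^ (j-1), r • x = 0 :=
    Nat.find_min hP (Nat.sub_lt (Nat.pos_of_ne_zero hj0) one_pos)
  push_neg at hlt
  obtain ⟨r, hr, hrx⟩ := hlt
  refine ⟨r, hrx, fun s hs => ?_⟩
  rw [smul_smul]
  refine hj (s * r) ?_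
  have : (maximalIdeal R) * (maximalIdeal R) ^ (j-1) = (maximalIdeal R) ^ j := by
    rw [← pow_succ']
    congr 1
    omega
  rw [← this]
  exact Ideal.mul_mem_mul hs hr

lemma LCD_mem_max_of_mul_socle [IsLocalRing R] {θ r : R} (hθ : θ ≠ 0) (h : r * θ = 0) :
    r ∈ maximalIdeal R := by
  by_contra hr
  have hu : IsUnit r := not_not.1 (by simpa [mem_maximalIdeal, mem_nonunits_iff] using hr)
  obtain ⟨u, rfl⟩ := hu
  apply hθ
  calc θ = ↑u⁻¹ * (↑u * θ) := by rw [← mul_assoc]; simp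
  _ = 0 := by rw [h, mul_zero]

end LCDauxSocle

namespace LCDaux

variable {R : Type*} [CommRing R] {n : ℕ}

def dot (v w : Fin n → R) : R := ∑ i, v i * w i

lemma mem_dualCode {C : Submodule R (Fin n → R)} {v : Fin n → R} :
    v ∈ dualCode C ↔ ∀ w ∈ C, dot v w = 0 := Iff.rfl

lemma dot_comm (v w : Fin n → R) : dot v w = dot w v := by
  simp [dot, mul_comm]

lemma dot_add_left (u v w : Fin n → R) : dot (u + v) w = dot u w + dot v w := by
  simp [dot, add_mul, Finset.sum_add_distrib]

lemma dot_sub_left (u v w : Fin n → R) : dot (u - v) w = dot u w - dot v w := by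
  simp [dot, sub_mul, Finset.sum_sub_distrib]

lemma dot_smul_left (r : R) (v w : Fin n → R) : dot (r • v) w = r * dot v w := by
  simp [dot, Finset.mul_sum, mul_assoc]

lemma smul_dot (r : R) (v w : Fin n → R) : dot v (r • w) = r * dot v w := by
  rw [dot_comm, dot_smul_left, dot_comm]

/-- dot with a fixed w, as a linear map in the first argument. -/
def dotR (w : Fin n → R) : (Fin n → R) →ₗ[R] R where
  toFun v := dot v w
  map_add' u v := dot_add_left u v w
  map_smul' r v := dot_smul_left r v w

lemma dot_sum_smul {k : ℕ} (α : Fin k → R) (v : Fin k → Fin n → R) (w : Fin n → R) :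
    dot (∑ i, α i • v i) w = ∑ i, α i * dot (v i) w := by
  rw [show dot (∑ i, α i • v i) w = dotR w (∑ i, α i • v i) from rfl]
  simp [map_sum, dotR, dot_smul_left]

end LCDaux

namespace LCDaux

lemma split {R : Type*} [CommRing R] [Nontrivial R] {n k : ℕ} [NeZero k]
    (C : Submodule R (Fin n → R)) (hLCD : C ⊓ dualCode C = ⊥)
    (v : Fin k → Fin n → R) (hv : ∀ i, v i ∈ C)
    (hG : IsUnit (Matrix.of (fun i j => dot (v i) (v j))).det) :
    ∃ C₁ : Submodule R (Fin n → R), C₁ < C ∧ C₁ ⊓ dualCode C₁ = ⊥ ∧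
      (Module.Free R C₁ → Module.Free R C) := by
  classical
  set G : Matrix (Fin k) (Fin k) R := Matrix.of (fun i j => dot (v i) (v j)) with hGdef
  -- the linear combination map
  let f : (Fin k → R) →ₗ[R] (Fin n → R) :=
    { toFun := fun α => ∑ i, α i • v i
      map_add' := by intro a b; simp [add_smul, Finset.sum_add_distrib]
      map_smul' := by intro r a; simp [smul_smul, Finset.smul_sum]
    }
  have hf_apply : ∀ α, f α = ∑ i, α i • v i := fun _ => rfl
  have hfC : ∀ α, f α ∈ C := by
    intro α
    rw [hf_apply]
    exact Submodule.sum_mem C (fun i _ => Submodule.smul_mem C _ (hv i))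
  have hdotf : ∀ (α : Fin k → R) (j : Fin k), dot (f α) (v j) = Matrix.vecMul α G j := by
    intro α j
    rw [hf_apply, dot_sum_smul]
    simp [Matrix.vecMul, dotProduct, hGdef]
  -- injectivity of f
  have hfinj : Function.Injective f := by
    rw [injective_iff_map_eq_zero]
    intro α hα
    have h0 : Matrix.vecMul α G = 0 := by
      funext j
      rw [← hdotf α j, hα]
      simp [dot]
    have := congrArg (fun β => Matrix.vecMul β G⁻¹) h0
    simpa [Matrix.vecMul_vecMul, Matrix.mul_nonsing_inv G hG] using this
  -- the complement
  set C₁ : Submodule R (Fin n → R) := C ⊓ (⨅ j, LinearMap.ker (dotR (v j))) with hC₁def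
  have hmemC₁ : ∀ x, x ∈ C₁ ↔ x ∈ C ∧ ∀ j, dot x (v j) = 0 := by
    intro x
    simp [hC₁def, Submodule.mem_iInf, LinearMap.mem_ker, dotR]
  have hC₁le : C₁ ≤ C := inf_le_left
  -- decomposition
  have hdec : ∀ x ∈ C, x - f (Matrix.vecMul (fun j => dot x (v j)) G⁻¹) ∈ C₁ := by
    intro x hx
    set α := Matrix.vecMul (fun j => dot x (v j)) G⁻¹ with hα
    rw [hmemC₁]
    constructor
    · exact Submodule.sub_mem C hx (hfC α)
    · intro j
      rw [dot_sub_left, hdotf, hα, Matrix.vecMul_vecMul, Matrix.nonsing_inv_mul G hG,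
        Matrix.vecMul_one]
      simp
  -- strictness
  have hv0 : v 0 ∉ C₁ := by
    intro h
    have hrow : ∀ j, G 0 j = 0 := fun j => ((hmemC₁ (v 0)).1 h).2 j
    have : G.det = 0 := Matrix.det_eq_zero_of_row_eq_zero 0 hrow
    rw [this] at hG
    simp [isUnit_zero_iff] at hG
  refine ⟨C₁, lt_of_le_of_ne hC₁le (fun h => hv0 (h ▸ hv 0)), ?_, ?_⟩
  · -- hull C₁ = ⊥
    rw [eq_bot_iff]
    intro x hx
    obtain ⟨hxC₁, hxdual⟩ := Submodule.mem_inf.1 hx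
    have hxC : x ∈ C := hC₁le hxC₁
    have hxperp : ∀ j, dot x (v j) = 0 := ((hmemC₁ x).1 hxC₁).2
    have : x ∈ C ⊓ dualCode C := by
      refine Submodule.mem_inf.2 ⟨hxC, ?_⟩
      rw [mem_dualCode]
      intro z hz
      set α := Matrix.vecMul (fun j => dot z (v j)) G⁻¹ with hα
      have hw : z - f α ∈ C₁ := hdec z hz
      have h1 : dot x (z - f α) = 0 := (mem_dualCode.1 hxdual) _ hw
      have h2 : dot x (f α) = 0 := by
        rw [dot_comm, hf_apply, dot_sum_smul]
        refine Finset.sum_eq_zero (fun i _ => ?_)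
        rw [dot_comm, hxperp i, mul_zero]
      calc dot x z = dot (z - f α + f α) x := by rw [sub_add_cancel, dot_comm]
      _ = dot (z - f α) x + dot (f α) x := dot_add_left _ _ _
      _ = dot x (z - f α) + dot x (f α) := by rw [dot_comm, dot_comm (f α)]
      _ = 0 := by rw [h1, h2, add_zero]
    rw [hLCD] at this
    exact this
  · -- freeness transfer
    intro hfree
    set p : Submodule R C := (LinearMap.range f).comap C.subtype with hp
    set q : Submodule R C := C₁.comap C.subtype with hq
    have hcompl : IsCompl p q := by
      constructor
      · rw [disjoint_iff]
        rw [eq_bot_iff]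
        rintro ⟨x, hxC⟩ hx
        obtain ⟨hxp, hxq⟩ := Submodule.mem_inf.1 hx
        obtain ⟨α, hα⟩ := Submodule.mem_comap.1 hxp
        have hperp : ∀ j, dot x (v j) = 0 := ((hmemC₁ x).1 (Submodule.mem_comap.1 hxq)).2
        have h0 : Matrix.vecMul α G = 0 := by
          funext j
          rw [← hdotf α j]
          simp only [Submodule.coe_subtype] at hα
          rw [hα]
          exact hperp j
        have hα0 : α = 0 := by
          have := congrArg (fun β => Matrix.vecMul β G⁻¹) h0
          simpa [Matrix.vecMul_vecMul, Matrix.mul_nonsing_inv G hG] using this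
        have : x = 0 := by
          simp only [Submodule.coe_subtype] at hα
          rw [← hα, hα0, map_zero]
        exact Submodule.mem_bot R (M := C) |>.2 (by ext; simp [this])
      · rw [codisjoint_iff_le_sup]
        rintro ⟨x, hxC⟩ -
        set α := Matrix.vecMul (fun j => dot x (v j)) G⁻¹ with hα
        refine Submodule.mem_sup.2 ⟨⟨f α, hfC α⟩, ?_, ⟨x - f α, Submodule.sub_mem C hxC (hfC α)⟩, ?_, ?_⟩
        · exact Submodule.mem_comap.2 ⟨α, rfl⟩
        · exact Submodule.mem_comap.2 (hdec x hxC)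
        · ext; simp
    have e1 : (p × q) ≃ₗ[R] C := Submodule.prodEquivOfIsCompl p q hcompl
    have e2 : p ≃ₗ[R] LinearMap.range f := Submodule.comapSubtypeEquivOfLe (by
      rintro x ⟨α, rfl⟩; exact hfC α)
    have e3 : (Fin k → R) ≃ₗ[R] LinearMap.range f := LinearEquiv.ofInjective f hfinj
    have e4 : q ≃ₗ[R] C₁ := Submodule.comapSubtypeEquivOfLe hC₁le
    have : Module.Free R p := Module.Free.of_equiv (e3.trans e2.symm)
    have : Module.Free R q := Module.Free.of_equiv e4.symm
    exact Module.Free.of_equiv e1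

end LCDaux

/-- over a Frobenius ring, an LCD code (C ∩ C^⊥ = 0) is free. -/
theorem stmt13 (R : Type*) [CommRing R] [IsLocalRing R] [IsArtinianRing R]
    (hR : IsFrobenius R) {n : ℕ} (C : Submodule R (Fin n → R))
    (hLCD : C ⊓ dualCode C = ⊥) :
    Module.Free R C := by
  clear hR
  revert hLCD
  refine WellFoundedLT.induction (motive := fun D => D ⊓ dualCode D = ⊥ → Module.Free R D) C ?_
  intro C ih hLCD
  by_cases hbot : C = ⊥
  · subst hbot
    exact Module.Free.of_subsingleton R _
  by_cases hu : ∃ c ∈ C, ∃ d ∈ C, IsUnit (LCDaux.dot c d)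
  · obtain ⟨c, hc, d, hd, hcd⟩ := hu
    by_cases h1 : IsUnit (LCDaux.dot c c)
    · obtain ⟨C₁, hlt, hh, himp⟩ := LCDaux.split C hLCD ![c]
        (by intro i; fin_cases i <;> simpa)
        (by simpa [Matrix.det_fin_one] using h1)
      exact himp (ih C₁ hlt hh)
    · by_cases h2 : IsUnit (LCDaux.dot d d)
      · obtain ⟨C₁, hlt, hh, himp⟩ := LCDaux.split C hLCD ![d]
          (by intro i; fin_cases i <;> simpa)
          (by simpa [Matrix.det_fin_one] using h2)
        exact himp (ih C₁ hlt hh)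
      · have hdet : IsUnit (Matrix.of
            (fun i j => LCDaux.dot ((![c, d]) i) ((![c, d]) j))).det := by
          rw [Matrix.det_fin_two]
          simp only [Matrix.of_apply, Matrix.cons_val', Matrix.cons_val_zero,
            Matrix.empty_val', Matrix.cons_val_fin_one, Matrix.cons_val_one, Matrix.head_cons,
            Matrix.head_fin_const]
          by_contra hdet'
          have hmem : LCDaux.dot c c * LCDaux.dot d d - LCDaux.dot c d * LCDaux.dot d c
              ∈ maximalIdeal R := hdet'
          have hcc : LCDaux.dot c c ∈ maximalIdeal R := h1
          have hprod : LCDaux.dot c d * LCDaux.dot d c ∈ maximalIdeal R := by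
            have : LCDaux.dot c d * LCDaux.dot d c =
                LCDaux.dot c c * LCDaux.dot d d -
                (LCDaux.dot c c * LCDaux.dot d d - LCDaux.dot c d * LCDaux.dot d c) := by ring
            rw [this]
            exact Submodule.sub_mem _ (Ideal.mul_mem_right _ _ hcc) hmem
          have hunit : IsUnit (LCDaux.dot c d * LCDaux.dot d c) := by
            rw [LCDaux.dot_comm d c]
            exact hcd.mul hcd
          exact hprod hunit
        obtain ⟨C₁, hlt, hh, himp⟩ := LCDaux.split C hLCD ![c, d]
          (by intro i; fin_cases i <;> simpa) hdet
        exact himp (ih C₁ hlt hh)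
  · exfalso
    push_neg at hu
    have hm : ∀ a ∈ C, ∀ b ∈ C, LCDaux.dot a b ∈ maximalIdeal R := fun a ha b hb => hu a ha b hb
    obtain ⟨θ, hθ1, hθm1⟩ := LCD_exists_smul_socle (R := R) (M := R) 1 one_ne_zero
    have hθ0 : θ ≠ 0 := by simpa using hθ1
    have hθm : ∀ s ∈ maximalIdeal R, s * θ = 0 := by
      intro s hs
      simpa [smul_eq_mul, mul_comm] using hθm1 s hs
    -- Step (a): every coordinate of every codeword lies in m
    have hcoord : ∀ w ∈ C, ∀ i, w i ∈ maximalIdeal R := by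
      intro w hw i
      have h1 : θ • w ∈ C := Submodule.smul_mem C θ hw
      have h2 : θ • w ∈ dualCode C := by
        rw [LCDaux.mem_dualCode]
        intro z hz
        rw [LCDaux.dot_smul_left, mul_comm]
        exact hθm _ (hm w hw z hz)
      have h3 : θ • w ∈ C ⊓ dualCode C := Submodule.mem_inf.2 ⟨h1, h2⟩
      rw [hLCD, Submodule.mem_bot] at h3
      have h4 : θ * w i = 0 := by
        have := congrFun h3 i
        simpa [Pi.smul_apply, smul_eq_mul] using this
      exact LCD_mem_max_of_mul_socle hθ0 (by rw [mul_comm]; exact h4)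
    -- Step (b): produce a nonzero hull element
    obtain ⟨x, hxC, hx0⟩ := Submodule.ne_bot_iff C |>.1 hbot
    obtain ⟨r, hrx, hrm⟩ := LCD_exists_smul_socle (R := R) (M := Fin n → R) x hx0
    have hcC : r • x ∈ C := Submodule.smul_mem C r hxC
    have hcdual : r • x ∈ dualCode C := by
      rw [LCDaux.mem_dualCode]
      intro z hz
      rw [LCDaux.dot]
      refine Finset.sum_eq_zero (fun i _ => ?_)
      have h5 : (z i) • (r • x) = 0 := hrm (z i) (hcoord z hz i)
      have h6 : z i * (r • x) i = 0 := by
        have := congrFun h5 i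
        simpa [Pi.smul_apply, smul_eq_mul] using this
      rw [mul_comm]
      exact h6
    have : r • x ∈ C ⊓ dualCode C := Submodule.mem_inf.2 ⟨hcC, hcdual⟩
    rw [hLCD, Submodule.mem_bot] at this
    exact hrx this
end

section
/- Let R be an Artinian local ring and C ⊆ R^n an MDS code of minimum distance d. Then there exists an R-linear map η: R^n → C restricting to the identity on C; in particular, C is a direct summand of R^n. -/
open IsLocalRing

open Order


section OrderAux

variable {α β : Type*} [PartialOrder α] [PartialOrder β]

lemma height_add_one_le' {x y : α} (h : x < y) :
    Order.height x + 1 ≤ Order.height y := by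
  rw [Order.height_eq_iSup_lt_height y]
  exact le_iSup₂ (f := fun z (_ : z < y) => Order.height z + 1) x h

lemma LTSeries.length_le_height_add (p : LTSeries (α × β)) :
    (p.length : ℕ∞) ≤ Order.height p.last.1 + Order.height p.last.2 := by
  suffices H : ∀ (m : ℕ) (p : LTSeries (α × β)), p.length = m →
      (p.length : ℕ∞) ≤ Order.height p.last.1 + Order.height p.last.2 from H p.length p rfl
  intro m
  induction m with
  | zero => intro p hn; simp [hn]
  | succ n ih =>
    intro p hn
    have hne : p.length ≠ 0 := by omega
    have h1 : p.eraseLast.length = n := by simp [hn]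
    have hlt : p.eraseLast.last < p.last := p.eraseLast_last_rel_last hne
    have IH : (n : ℕ∞) ≤ Order.height p.eraseLast.last.1 + Order.height p.eraseLast.last.2 := by
      have := ih p.eraseLast h1; rwa [h1] at this
    have key : ((n : ℕ∞) + 1) ≤ Order.height p.last.1 + Order.height p.last.2 := by
      rcases Prod.lt_iff.mp hlt with ⟨h1', h2'⟩ | ⟨h1', h2'⟩
      · calc (n : ℕ∞) + 1
            ≤ (Order.height p.eraseLast.last.1 + Order.height p.eraseLast.last.2) + 1 :=
              add_le_add_left IH 1
          _ = (Order.height p.eraseLast.last.1 + 1) + Order.height p.eraseLast.last.2 := by ring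
          _ ≤ Order.height p.last.1 + Order.height p.last.2 :=
              add_le_add (height_add_one_le' h1') (Order.height_mono h2')
      · calc (n : ℕ∞) + 1
            ≤ (Order.height p.eraseLast.last.1 + Order.height p.eraseLast.last.2) + 1 :=
              add_le_add_left IH 1
          _ = Order.height p.eraseLast.last.1 + (Order.height p.eraseLast.last.2 + 1) := by ring
          _ ≤ Order.height p.last.1 + Order.height p.last.2 :=
              add_le_add (Order.height_mono h1') (height_add_one_le' h2')
    rw [hn]
    exact le_trans (by push_cast; rfl) key

end OrderAux
section Elen

/-- length as `ℕ∞` -/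
noncomputable def elen (R M : Type*) [Ring R] [AddCommGroup M] [Module R M] : ℕ∞ :=
  Order.height (⊤ : Submodule R M)

variable {R M M' M₂ : Type*} [Ring R] [AddCommGroup M] [Module R M]
  [AddCommGroup M'] [Module R M'] [AddCommGroup M₂] [Module R M₂]

lemma elen_le_of_injective (f : M →ₗ[R] M') (hf : Function.Injective f) :
    elen R M ≤ elen R M' := by
  apply Order.height_le
  intro p _
  have smono : StrictMono (Submodule.map f) :=
    Monotone.strictMono_of_injective (fun _ _ h => Submodule.map_mono h)
      (Submodule.map_injective_of_injective hf)
  exact Order.length_le_height (p := p.map _ smono) le_top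

lemma elen_le_of_surjective (f : M →ₗ[R] M') (hf : Function.Surjective f) :
    elen R M' ≤ elen R M := by
  apply Order.height_le
  intro p _
  have smono : StrictMono (Submodule.comap f) :=
    Monotone.strictMono_of_injective (fun _ _ h => Submodule.comap_mono h)
      (Submodule.comap_injective_of_surjective hf)
  exact Order.length_le_height (p := p.map _ smono) le_top

lemma elen_congr (e : M ≃ₗ[R] M') : elen R M = elen R M' :=
  le_antisymm (elen_le_of_injective e.toLinearMap e.injective)
    (elen_le_of_injective e.symm.toLinearMap e.symm.injective)

lemma elen_subadd (N : Submodule R M) :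
    elen R M ≤ elen R N + elen R (M ⧸ N) := by
  apply Order.height_le
  intro p _
  have Fstrict : StrictMono (fun P : Submodule R M =>
      ((P.comap N.subtype, P.map N.mkQ) : Submodule R N × Submodule R (M ⧸ N))) := by
    intro P Q h
    refine lt_iff_le_and_ne.mpr ⟨⟨Submodule.comap_mono h.le, Submodule.map_mono h.le⟩, ?_⟩
    intro heq
    dsimp only at heq
    rw [Prod.ext_iff] at heq
    obtain ⟨hc, hm⟩ := heq
    simp only at hc hm
    have e1 : N ⊓ P = N ⊓ Q := by
      rw [← Submodule.map_comap_subtype, hc, Submodule.map_comap_subtype]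
    have e2 : N ⊔ P = N ⊔ Q := by
      rw [← Submodule.comap_map_mkQ, hm, Submodule.comap_map_mkQ]
    have : Q = P := by
      calc Q = (N ⊔ Q) ⊓ Q := (inf_eq_right.mpr le_sup_right).symm
        _ = (P ⊔ N) ⊓ Q := by rw [← e2, sup_comm]
        _ = P ⊔ (N ⊓ Q) := sup_inf_assoc_of_le N h.le
        _ = P ⊔ (N ⊓ P) := by rw [← e1]
        _ = P := sup_eq_left.mpr inf_le_right
    exact h.ne this.symm
  have := LTSeries.length_le_height_add (p.map _ Fstrict)
  refine this.trans (add_le_add (Order.height_mono le_top) (Order.height_mono le_top))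

lemma elen_superadd (N : Submodule R M) (ha : elen R N ≠ ⊤) (hb : elen R (M ⧸ N) ≠ ⊤) :
    elen R N + elen R (M ⧸ N) ≤ elen R M := by
  set a := (elen R N).toNat with hadef
  set b := (elen R (M ⧸ N)).toNat with hbdef
  have haeq : Order.height (⊤ : Submodule R N) = (a : ℕ∞) := (ENat.coe_toNat ha).symm
  have hbeq : Order.height (⊤ : Submodule R (M ⧸ N)) = (b : ℕ∞) := (ENat.coe_toNat hb).symm
  obtain ⟨p, hplast, hplen⟩ := Order.exists_series_of_height_eq_coe _ haeq
  obtain ⟨q, hqlast, hqlen⟩ := Order.exists_series_of_height_eq_coe _ hbeq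
  have hqhead : q.head = ⊥ := by
    by_contra hne
    have hlt : (⊥ : Submodule R (M ⧸ N)) < q.head := Ne.bot_lt hne
    have h2 := Order.length_le_height_last (p := q.cons ⊥ hlt)
    rw [RelSeries.last_cons, hqlast, hbeq] at h2
    rw [show (q.cons ⊥ hlt).length = q.length + 1 from by simp] at h2
    have : q.length + 1 ≤ b := by exact_mod_cast h2
    omega
  have smono1 : StrictMono (Submodule.map N.subtype) :=
    Monotone.strictMono_of_injective (fun _ _ h => Submodule.map_mono h)
      (Submodule.map_injective_of_injective N.injective_subtype)
  have smono2 : StrictMono (Submodule.comap N.mkQ) :=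
    Monotone.strictMono_of_injective (fun _ _ h => Submodule.comap_mono h)
      (Submodule.comap_injective_of_surjective N.mkQ_surjective)
  have hconn : (p.map _ smono1).last = (q.map _ smono2).head := by
    rw [LTSeries.last_map, LTSeries.head_map, hplast, hqhead, Submodule.map_subtype_top,
      Submodule.comap_bot, Submodule.ker_mkQ]
  have h3 := Order.length_le_height_last (p := (p.map _ smono1).smash (q.map _ smono2) hconn)
  rw [RelSeries.last_smash] at h3
  have hQlast : (q.map _ smono2).last = ⊤ := by
    rw [LTSeries.last_map, hqlast, Submodule.comap_top]
  rw [hQlast] at h3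
  have hlen : ((p.map _ smono1).smash (q.map _ smono2) hconn).length = a + b := by
    show p.length + q.length = a + b
    omega
  rw [hlen] at h3
  calc elen R N + elen R (M ⧸ N) = ((a + b : ℕ) : ℕ∞) := by
        rw [elen, elen, haeq, hbeq]; push_cast; rfl
    _ ≤ elen R M := h3

lemma elen_eq_zero_of_subsingleton [Subsingleton M] : elen R M = 0 := by
  rw [elen, Order.height_eq_zero]
  intro b _
  have : b = ⊤ := by
    rw [Submodule.eq_top_iff']
    intro x
    rw [Subsingleton.elim x 0]
    exact b.zero_mem
  exact this.ge

lemma elen_ne_top_of_isFiniteLength (h : IsFiniteLength R M) : elen R M ≠ ⊤ := by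
  induction h with
  | of_subsingleton => simp [elen_eq_zero_of_subsingleton]
  | @of_simple_quotient M _ _ N _ h ih =>
    have hq : elen R (M ⧸ N) ≤ 1 := by
      rw [elen]
      rw [show (1 : ℕ∞) = ((1 : ℕ) : ℕ∞) from rfl, Order.height_le_coe_iff]
      intro y hy
      have : y = ⊥ := (eq_bot_or_eq_top y).resolve_right (fun h => hy.ne h)
      simp [this]
    intro htop
    have := elen_subadd N
    rw [htop, top_le_iff] at this
    rcases WithTop.add_eq_top.mp this with h' | h'
    · exact ih h'
    · exact absurd hq (by rw [show elen R (M ⧸ N) = (⊤ : ℕ∞) from h']; simp)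

lemma elen_lt_of_ne_top (P : Submodule R M) (hP : P ≠ ⊤) (hfin : elen R P ≠ ⊤) :
    elen R P + 1 ≤ elen R M := by
  set a := (elen R P).toNat with hadef
  have haeq : Order.height (⊤ : Submodule R P) = (a : ℕ∞) := (ENat.coe_toNat hfin).symm
  obtain ⟨p, hplast, hplen⟩ := Order.exists_series_of_height_eq_coe _ haeq
  have smono1 : StrictMono (Submodule.map P.subtype) :=
    Monotone.strictMono_of_injective (fun _ _ h => Submodule.map_mono h)
      (Submodule.map_injective_of_injective P.injective_subtype)
  have hlt : (p.map _ smono1).last < ⊤ := by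
    rw [LTSeries.last_map, hplast, Submodule.map_subtype_top]
    exact lt_top_iff_ne_top.mpr hP
  have h3 := Order.length_le_height_last (p := (p.map _ smono1).snoc ⊤ hlt)
  have hlen : ((p.map _ smono1).snoc ⊤ hlt).length = a + 1 := by
    show p.length + 1 = a + 1
    omega
  rw [hlen, RelSeries.last_snoc] at h3
  calc elen R P + 1 = ((a + 1 : ℕ) : ℕ∞) := by rw [elen, haeq]; push_cast; rfl
    _ ≤ elen R M := h3

lemma elen_eq_add (N : Submodule R M) (hfin : elen R M ≠ ⊤) :
    elen R M = elen R N + elen R (M ⧸ N) := by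
  have hN : elen R N ≠ ⊤ :=
    fun h => hfin (top_le_iff.mp (h ▸ elen_le_of_injective N.subtype N.injective_subtype))
  have hQ : elen R (M ⧸ N) ≠ ⊤ :=
    fun h => hfin (top_le_iff.mp (h ▸ elen_le_of_surjective N.mkQ N.mkQ_surjective))
  exact le_antisymm (elen_subadd N) (elen_superadd N hN hQ)

lemma elen_prod (hM : elen R M ≠ ⊤) (hM₂ : elen R M₂ ≠ ⊤) :
    elen R (M × M₂) = elen R M + elen R M₂ := by
  have e1 : (Submodule.fst R M M₂ : Type _) ≃ₗ[R] M := Submodule.fstEquiv R M M₂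
  have hsnd : Function.Surjective (LinearMap.snd R M M₂) := fun x => ⟨(0, x), rfl⟩
  have e2 : ((M × M₂) ⧸ Submodule.fst R M M₂) ≃ₗ[R] M₂ :=
    (LinearMap.snd R M M₂).quotKerEquivOfSurjective hsnd
  have key : elen R (Submodule.fst R M M₂) + elen R ((M × M₂) ⧸ Submodule.fst R M M₂)
      = elen R M + elen R M₂ := by
    rw [elen_congr e1, elen_congr e2]
  have hfin : elen R (M × M₂) ≠ ⊤ := by
    intro h
    have := elen_subadd (Submodule.fst R M M₂)
    rw [h, top_le_iff, key] at this
    rcases WithTop.add_eq_top.mp this with h' | h'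
    · exact hM h'
    · exact hM₂ h'
  rw [elen_eq_add (Submodule.fst R M M₂) hfin, key]

end Elen
section Pi

variable {R : Type*} [Ring R]

/-- `R^{k+1} ≃ R × R^k` -/
def finSuccPiEquiv (R : Type*) [Ring R] (k : ℕ) :
    (Fin (k + 1) → R) ≃ₗ[R] R × (Fin k → R) where
  toFun v := (v 0, fun i => v i.succ)
  invFun p := Fin.cons p.1 p.2
  map_add' _ _ := rfl
  map_smul' _ _ := rfl
  left_inv v := Fin.cons_self_tail v
  right_inv p := by
    refine Prod.ext ?_ ?_
    · simp
    · funext i; simp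

lemma elen_pi (hR : elen R R ≠ ⊤) (k : ℕ) :
    elen R (Fin k → R) = (k : ℕ∞) * elen R R := by
  induction k with
  | zero =>
    have : Subsingleton (Fin 0 → R) := ⟨fun a b => funext fun i => i.elim0⟩
    simp [elen_eq_zero_of_subsingleton]
  | succ k ih =>
    have hfin : elen R (Fin k → R) ≠ ⊤ := by
      rw [ih]
      exact WithTop.mul_ne_top (WithTop.natCast_ne_top k) hR
    rw [elen_congr (finSuccPiEquiv R k), elen_prod hR hfin, ih]
    push_cast
    ring

end Pi

lemma lenN_eq_elen (R M : Type*) [CommRing R] [AddCommGroup M] [Module R M] :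
    lenN R M = (elen R M).toNat := by
  rw [lenN, ← Order.height_top_eq_krullDim, WithBot.unbotD_coe]
  rfl
section Torsion

variable {R : Type*} [CommRing R]

lemma isFiniteLength_of_torsionBySet (I : Ideal R) [I.IsMaximal] {Q : Type*} [AddCommGroup Q]
    [Module R Q] [IsArtinian R Q] (hQ : Module.IsTorsionBySet R Q I) :
    IsFiniteLength R Q := by
  letI : Module (R ⧸ I) Q := hQ.module
  letI : Field (R ⧸ I) := Ideal.Quotient.field I
  let iso : Submodule (R ⧸ I) Q ≃o Submodule R Q :=
    { toFun := fun p =>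
        { carrier := p
          zero_mem' := p.zero_mem
          add_mem' := fun ha hb => p.add_mem ha hb
          smul_mem' := fun r x hx => by
            have h : (r : R) • x = (Ideal.Quotient.mk I r) • x := (hQ.mk_smul r x).symm
            show r • x ∈ (p : Set Q); rw [h]; exact p.smul_mem (Ideal.Quotient.mk I r) hx }
      invFun := fun p =>
        { carrier := p
          zero_mem' := p.zero_mem
          add_mem' := fun ha hb => p.add_mem ha hb
          smul_mem' := fun c x hx => by
            obtain ⟨r, rfl⟩ := Ideal.Quotient.mk_surjective c
            have h : (Ideal.Quotient.mk I r) • x = r • x := hQ.mk_smul r x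
            simpa [h] using p.smul_mem r hx }
      left_inv := fun p => by ext x; rfl
      right_inv := fun p => by ext x; rfl
      map_rel_iff' := Iff.rfl }
  haveI : IsSemisimpleModule R Q := { toComplementedLattice := iso.complementedLattice }
  exact (IsSemisimpleModule.finite_tfae.out 2 3).mp ‹IsArtinian R Q›

lemma elen_ring_ne_top (R : Type*) [CommRing R] [IsLocalRing R] [IsArtinianRing R] :
    elen R R ≠ ⊤ := by
  obtain ⟨t, ht⟩ : IsNilpotent (IsLocalRing.maximalIdeal R) := by
    have h := IsArtinianRing.isNilpotent_jacobson_bot (R := R)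
    rwa [IsLocalRing.jacobson_eq_maximalIdeal ⊥ bot_ne_top] at h
  set m := IsLocalRing.maximalIdeal R with hm
  have key : ∀ i : ℕ, elen R (↥(m ^ (t - i) : Ideal R)) ≠ ⊤ := by
    intro i
    induction i with
    | zero =>
      have hbot : (m ^ (t - 0) : Ideal R) = ⊥ := by simpa using ht
      rw [hbot]
      haveI : Subsingleton (↥(⊥ : Ideal R)) := by
        constructor; rintro ⟨a, ha⟩ ⟨b, hb⟩
        simp only [Submodule.mem_bot] at ha hb
        simp [ha, hb]
      simp [elen_eq_zero_of_subsingleton]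
    | succ i ih =>
      by_cases hle : t ≤ i
      · rw [show t - (i + 1) = t - i from by omega]
        exact ih
      · set j := t - (i + 1) with hjdef
        have hj : t - i = j + 1 := by omega
        rw [hj] at ih
        have hsub : (m ^ (j + 1) : Ideal R) ≤ m ^ j :=
          Ideal.pow_le_pow_right (by omega)
        set N : Submodule R (↥(m ^ j : Ideal R)) :=
          Submodule.comap (m ^ j : Ideal R).subtype (m ^ (j + 1)) with hN
        have e1 : (↥N) ≃ₗ[R] ↥(m ^ (j + 1) : Ideal R) :=
          Submodule.comapSubtypeEquivOfLe hsub
        have htors : Module.IsTorsionBySet R ((↥(m ^ j : Ideal R)) ⧸ N) m := by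
          rw [Module.isTorsionBySet_quotient_iff]
          rintro x r hr
          show (r • x : ↥(m ^ j : Ideal R)).1 ∈ (m ^ (j + 1) : Ideal R)
          have : (r • x : ↥(m ^ j : Ideal R)).1 = x.1 * r := by
            simp [mul_comm]
          rw [this, pow_succ]
          exact Ideal.mul_mem_mul x.2 hr
        have hfl : IsFiniteLength R ((↥(m ^ j : Ideal R)) ⧸ N) :=
          isFiniteLength_of_torsionBySet m htors
        have h2 : elen R ((↥(m ^ j : Ideal R)) ⧸ N) ≠ ⊤ := elen_ne_top_of_isFiniteLength hfl
        have h1 : elen R (↥N) ≠ ⊤ := by rw [elen_congr e1]; exact ih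
        intro htop
        have hs := elen_subadd N
        rw [htop, top_le_iff] at hs
        rcases WithTop.add_eq_top.mp hs with h' | h'
        · exact h1 h'
        · exact h2 h'
  have h0 := key t
  rw [Nat.sub_self, pow_zero, Ideal.one_eq_top] at h0
  rw [elen_congr (Submodule.topEquiv (R := R) (M := R)).symm]
  exact h0

end Torsion
/-- an MDS code C ⊆ R^n admits an R-linear retraction η : R^n → C
restricting to the identity on C; in particular C is a direct summand of R^n. -/
theorem stmt16 (R : Type*) [CommRing R] [IsLocalRing R] [IsArtinianRing R]
    {n : ℕ} (C : Submodule R (Fin n → R)) (hC : C ≠ ⊥)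
    (hMDS : lenN R C = (n - dH C + 1) * lenN R R) :
    (∃ η : (Fin n → R) →ₗ[R] C, ∀ v : C, η (v : Fin n → R) = v) ∧
      ∃ N : Submodule R (Fin n → R), IsCompl C N := by
  classical
  have hRtop : elen R R ≠ ⊤ := elen_ring_ne_top R
  obtain ⟨v₀, hv₀C, hv₀⟩ := (Submodule.ne_bot_iff C).mp hC
  have hwtpos : ∀ v : Fin n → R, v ≠ 0 → 1 ≤ wt v := by
    intro v hv
    rw [Nat.one_le_iff_ne_zero]
    intro h0
    apply hv; funext i
    by_contra hvi
    have hmem : i ∈ Finset.univ.filter (fun i => v i ≠ 0) :=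
      Finset.mem_filter.mpr ⟨Finset.mem_univ _, hvi⟩
    rw [Finset.card_eq_zero.mp h0] at hmem
    exact absurd hmem (Finset.notMem_empty i)
  have hdmem : dH C ∈ {w : ℕ | ∃ v ∈ C, v ≠ 0 ∧ wt v = w} :=
    Nat.sInf_mem ⟨wt v₀, v₀, hv₀C, hv₀, rfl⟩
  obtain ⟨u, huC, hu0, huw⟩ := hdmem
  have hdle : ∀ v, v ∈ C → v ≠ 0 → dH C ≤ wt v := fun v hv h0 => Nat.sInf_le ⟨v, hv, h0, rfl⟩
  set d := dH C with hd
  have hd1 : 1 ≤ d := huw ▸ hwtpos u hu0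
  have hdn : d ≤ n := by
    rw [← huw, wt]
    exact le_trans (Finset.card_filter_le _ _) (by simp)
  set k := n - d + 1 with hk
  have hkn : k ≤ n := by omega
  let π : (Fin n → R) →ₗ[R] (Fin k → R) := LinearMap.funLeft R R (Fin.castLE hkn)
  let f : ↥C →ₗ[R] (Fin k → R) := π.comp C.subtype
  -- the count of coordinates ≥ k
  have hcount : (Finset.univ.filter (fun i : Fin n => ¬ ((i : ℕ) < k))).card = n - k := by
    have h1 : (Finset.univ.filter (fun i : Fin n => ((i : ℕ) < k))).card = k := by
      have : Finset.univ.filter (fun i : Fin n => ((i : ℕ) < k))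
          = Finset.univ.map (Fin.castLEEmb hkn) := by
        ext i
        simp only [Finset.mem_filter, Finset.mem_univ, true_and, Finset.mem_map]
        constructor
        · intro hi; exact ⟨⟨(i : ℕ), hi⟩, by simp [Fin.castLEEmb, Fin.castLE]⟩
        · rintro ⟨j, hj, rfl⟩
          simpa [Fin.castLEEmb, Fin.castLE] using j.2
      rw [this, Finset.card_map, Finset.card_univ, Fintype.card_fin]
    have h2 := Finset.card_filter_add_card_filter_not
      (s := (Finset.univ : Finset (Fin n))) (p := fun i : Fin n => ((i : ℕ) < k))
    rw [Finset.card_univ, Fintype.card_fin] at h2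
    omega
  have hker : ∀ v : ↥C, f v = 0 → v = 0 := by
    intro v hv
    by_contra hne
    have hv0 : (v : Fin n → R) ≠ 0 := fun h => hne (Subtype.ext h)
    have hsupp : ∀ i : Fin n, (i : ℕ) < k → (v : Fin n → R) i = 0 := by
      intro i hi
      have h := congrFun hv ⟨(i : ℕ), hi⟩
      have : (v : Fin n → R) (Fin.castLE hkn ⟨(i : ℕ), hi⟩) = 0 := h
      simpa [Fin.castLE, Fin.ext_iff] using this
    have hsub : Finset.univ.filter (fun i => (v : Fin n → R) i ≠ 0)
        ⊆ Finset.univ.filter (fun i : Fin n => ¬ ((i : ℕ) < k)) := by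
      intro i hi
      simp only [Finset.mem_filter, Finset.mem_univ, true_and] at hi ⊢
      intro hik
      exact hi (hsupp i hik)
    have hwtle : wt (v : Fin n → R) ≤ n - k := by
      rw [wt, ← hcount]
      exact Finset.card_le_card hsub
    have := hdle _ v.2 hv0
    omega
  have hinj : Function.Injective f := by
    rw [← LinearMap.ker_eq_bot]
    ext v
    simp only [LinearMap.mem_ker, Submodule.mem_bot]
    exact ⟨hker v, fun h => by rw [h]; simp⟩
  have hCfin : elen R ↥C ≠ ⊤ := by
    intro h
    have h1 := elen_le_of_injective C.subtype C.injective_subtype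
    rw [h, top_le_iff, elen_pi hRtop n] at h1
    exact WithTop.mul_ne_top (WithTop.natCast_ne_top n) hRtop h1
  have hkfin : elen R (Fin k → R) ≠ ⊤ := by
    rw [elen_pi hRtop]
    exact WithTop.mul_ne_top (WithTop.natCast_ne_top k) hRtop
  have hlen : elen R ↥C = elen R (Fin k → R) := by
    have h1 : (elen R ↥C).toNat = k * (elen R R).toNat := by
      rw [← lenN_eq_elen, ← lenN_eq_elen]
      exact hMDS
    calc elen R ↥C = ((elen R ↥C).toNat : ℕ∞) := (ENat.coe_toNat hCfin).symm
      _ = ((k * (elen R R).toNat : ℕ) : ℕ∞) := by rw [h1]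
      _ = (k : ℕ∞) * elen R R := by push_cast; rw [ENat.coe_toNat hRtop]
      _ = elen R (Fin k → R) := (elen_pi hRtop k).symm
  have hrange : elen R ↥(LinearMap.range f) = elen R ↥C :=
    (elen_congr (LinearEquiv.ofInjective f hinj)).symm
  have hsurj : Function.Surjective f := by
    rw [← LinearMap.range_eq_top]
    by_contra hne
    have hPfin : elen R ↥(LinearMap.range f) ≠ ⊤ := by
      rw [hrange, hlen]; exact hkfin
    have hlt := elen_lt_of_ne_top (LinearMap.range f) hne hPfin
    rw [hrange, hlen] at hlt
    have : elen R (Fin k → R) < elen R (Fin k → R) :=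
      (ENat.add_one_le_iff hkfin).mp hlt
    exact absurd this (lt_irrefl _)
  let e : ↥C ≃ₗ[R] (Fin k → R) := LinearEquiv.ofBijective f ⟨hinj, hsurj⟩
  let η : (Fin n → R) →ₗ[R] ↥C := e.symm.toLinearMap.comp π
  have hη : ∀ v : ↥C, η (v : Fin n → R) = v := by
    intro v
    show e.symm (π (v : Fin n → R)) = v
    have : π (v : Fin n → R) = e v := rfl
    rw [this, LinearEquiv.symm_apply_apply]
  exact ⟨⟨η, hη⟩, LinearMap.ker η, LinearMap.isCompl_of_proj hη⟩
end

section
/- Let R be an Artinian local ring and C ⊆ R^n an MDS code. Then λ(C(A)) = max{0, |A| − d + 1}·λ(R) for every subset A ⊆ {1,...,n}, where d = d_H(C); conversely, if this holds for all A, then C is MDS. -/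
open IsLocalRing

namespace Stmt17Aux
open Order

open Order

section Lattice
variable {α : Type*} [Lattice α] [IsModularLattice α]

lemma key_step (a : α) (hh : height a ≠ ⊤) (hc : coheight a ≠ ⊤) (p : LTSeries α)
    (i : Fin (p.length + 1)) :
    (i : ℕ∞) + coheight (p i ⊔ a) ≤ height (p i ⊓ a) + coheight (p.head ⊔ a) := by
  induction i using Fin.induction with
  | zero =>
      simp only [Fin.val_zero, Nat.cast_zero, zero_add]
      exact le_add_left (le_refl _)
  | succ i ih =>
      replace ih : (i : ℕ∞) + coheight ((p i.castSucc : α) ⊔ a) ≤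
          height (p i.castSucc ⊓ a) + coheight (p.head ⊔ a) := by simpa using ih
      have hlt : p i.castSucc < p i.succ := p.strictMono Fin.castSucc_lt_succ
      rcases (inf_le_inf_right a hlt.le).lt_or_eq with hinf | hinf
      · have hfin : height (p i.castSucc ⊓ a) < ⊤ :=
          lt_of_le_of_lt (height_mono inf_le_right) (lt_top_iff_ne_top.mpr hh)
        have hhh : height (p i.castSucc ⊓ a) + 1 ≤ height (p i.succ ⊓ a) :=
          (ENat.add_one_le_iff hfin.ne).mpr (height_strictMono hinf hfin)
        have hsup : coheight ((p i.succ : α) ⊔ a) ≤ coheight ((p i.castSucc : α) ⊔ a) :=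
          coheight_anti (sup_le_sup_right hlt.le a)
        calc ((i.succ : ℕ) : ℕ∞) + coheight ((p i.succ : α) ⊔ a)
            = ((i : ℕ∞) + coheight ((p i.succ : α) ⊔ a)) + 1 := by
              push_cast [Fin.val_succ]; ring
          _ ≤ ((i : ℕ∞) + coheight ((p i.castSucc : α) ⊔ a)) + 1 := by gcongr
          _ ≤ (height (p i.castSucc ⊓ a) + coheight (p.head ⊔ a)) + 1 := add_le_add_left ih 1
          _ = (height (p i.castSucc ⊓ a) + 1) + coheight (p.head ⊔ a) := by ring
          _ ≤ height (p i.succ ⊓ a) + coheight (p.head ⊔ a) := add_le_add_left hhh _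
      · have hsup : p i.castSucc ⊔ a < p i.succ ⊔ a :=
          sup_lt_sup_of_lt_of_inf_le_inf hlt hinf.ge
        have h2 : coheight ((p i.succ : α) ⊔ a) < coheight ((p i.castSucc : α) ⊔ a) :=
          coheight_strictAnti hsup (lt_of_le_of_lt (coheight_anti le_sup_right)
            (lt_top_iff_ne_top.mpr hc))
        have h1 : coheight ((p i.succ : α) ⊔ a) + 1 ≤ coheight ((p i.castSucc : α) ⊔ a) :=
          (ENat.add_one_le_iff (by rintro h; rw [h] at h2; exact not_top_lt h2)).mpr h2
        calc ((i.succ : ℕ) : ℕ∞) + coheight ((p i.succ : α) ⊔ a)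
            = (i : ℕ∞) + (coheight ((p i.succ : α) ⊔ a) + 1) := by
              push_cast [Fin.val_succ]; ring
          _ ≤ (i : ℕ∞) + coheight ((p i.castSucc : α) ⊔ a) := add_le_add_right h1 _
          _ ≤ height (p i.castSucc ⊓ a) + coheight (p.head ⊔ a) := ih
          _ ≤ height (p i.succ ⊓ a) + coheight (p.head ⊔ a) :=
              add_le_add_left (height_mono (inf_le_inf_right a hlt.le)) _

lemma krullDim_eq_height_add_coheight (a : α) (hh : height a ≠ ⊤) (hc : coheight a ≠ ⊤) :
    krullDim α = ((height a + coheight a : ℕ∞) : WithBot ℕ∞) := by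
  have : Nonempty α := ⟨a⟩
  apply le_antisymm
  · rw [krullDim_eq_iSup_length, WithBot.coe_le_coe]
    apply iSup_le
    intro p
    have h := key_step a hh hc p (Fin.last _)
    rw [Fin.val_last] at h
    calc (p.length : ℕ∞) ≤ (p.length : ℕ∞) + coheight (p (Fin.last _) ⊔ a) := le_self_add
      _ ≤ height (p (Fin.last _) ⊓ a) + coheight (p.head ⊔ a) := h
      _ ≤ height a + coheight a :=
          add_le_add (height_mono inf_le_right) (coheight_anti le_sup_right)
  · rw [krullDim_eq_iSup_height_add_coheight_of_nonempty, WithBot.coe_le_coe]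
    exact le_iSup (fun x : α => height x + coheight x) a

end Lattice

section HC
variable {α : Type*} [PartialOrder α]

lemma krullDim_Iic (a : α) : krullDim (Set.Iic a) = ((height a : ℕ∞) : WithBot ℕ∞) := by
  have : Nonempty (Set.Iic a) := ⟨⟨a, le_refl a⟩⟩
  rw [krullDim_eq_iSup_length, WithBot.coe_inj]
  apply le_antisymm
  · apply iSup_le
    intro p
    have := length_le_height (p := p.map Subtype.val (fun _ _ h => h))
      (x := a) (by exact (p.last).2)
    exact this
  · rw [height_eq_iSup_last_eq]
    apply iSup₂_le
    intro p hlast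
    refine le_iSup_of_le ⟨p.length, fun i => ⟨p i, hlast ▸ p.monotone (Fin.le_last i)⟩,
      fun i => p.step i⟩ (by simp)

lemma krullDim_ge (a : α) : krullDim {x : α // a ≤ x} = ((coheight a : ℕ∞) : WithBot ℕ∞) := by
  have : Nonempty {x : α // a ≤ x} := ⟨⟨a, le_refl a⟩⟩
  rw [krullDim_eq_iSup_length, WithBot.coe_inj]
  apply le_antisymm
  · apply iSup_le
    intro p
    have := length_le_coheight (p := p.map Subtype.val (fun _ _ h => h))
      (x := a) (by exact (p.head).2)
    exact this
  · rw [coheight_eq_iSup_head_eq]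
    apply iSup₂_le
    intro p hhead
    refine le_iSup_of_le ⟨p.length, fun i => ⟨p i, hhead ▸ p.monotone (Fin.zero_le i)⟩,
      fun i => p.step i⟩ (by simp)

end HC

section Mod
variable {R M : Type*} [Ring R] [AddCommGroup M] [Module R M]

noncomputable def kd (R M : Type*) [Ring R] [AddCommGroup M] [Module R M] : WithBot ℕ∞ :=
  krullDim (Submodule R M)

lemma kd_congr {N : Type*} [AddCommGroup N] [Module R N] (e : M ≃ₗ[R] N) : kd R M = kd R N :=
  krullDim_eq_of_orderIso (Submodule.orderIsoMapComap e)

lemma kd_height (N : Submodule R M) : kd R N = ((height N : ℕ∞) : WithBot ℕ∞) := by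
  rw [kd, krullDim_eq_of_orderIso (Submodule.mapIic N), krullDim_Iic]

lemma kd_coheight (N : Submodule R M) : kd R (M ⧸ N) = ((coheight N : ℕ∞) : WithBot ℕ∞) := by
  rw [kd, krullDim_eq_of_orderIso (Submodule.comapMkQRelIso N)]
  exact krullDim_ge N

lemma kd_add (N : Submodule R M) (h1 : kd R N ≠ ⊤) (h2 : kd R (M ⧸ N) ≠ ⊤) :
    kd R M = kd R N + kd R (M ⧸ N) := by
  rw [kd_height] at h1 ⊢
  rw [kd_coheight] at h2 ⊢
  have hh : height N ≠ ⊤ := by intro h; rw [h] at h1; exact h1 rfl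
  have hc : coheight N ≠ ⊤ := by intro h; rw [h] at h2; exact h2 rfl
  rw [kd, krullDim_eq_height_add_coheight N hh hc]
  push_cast
  rfl

lemma kd_subsingleton [Subsingleton M] : kd R M = 0 := by
  have : Subsingleton (Submodule R M) := by
    constructor; intro p q; ext x
    have : x = 0 := Subsingleton.elim x 0
    simp [this]
  exact le_antisymm (krullDim_nonpos_of_subsingleton) (krullDim_nonneg)

lemma kd_simple [IsSimpleModule R M] : kd R M = 1 := by
  apply le_antisymm
  · apply iSup_le
    intro p
    have hlen : p.length ≤ 1 := by
      by_contra hcon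
      push_neg at hcon
      have h0 : (0 : ℕ) < 1 := one_pos
      have hx01 : p ⟨0, by omega⟩ < p ⟨1, by omega⟩ := p.strictMono (by simp [Fin.lt_def])
      have hx12 : p ⟨1, by omega⟩ < p ⟨2, by omega⟩ := p.strictMono (by simp [Fin.lt_def])
      rcases eq_bot_or_eq_top (p ⟨1, by omega⟩) with h | h
      · rw [h] at hx01; exact not_lt_bot hx01
      · rw [h] at hx12; exact not_top_lt hx12
    exact_mod_cast Nat.cast_le.mpr hlen
  · refine le_iSup_of_le ⟨1, ![⊥, ⊤], fun i => ?_⟩ (by simp)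
    fin_cases i
    simpa using bot_lt_top

lemma exists_kd_nat (h : IsFiniteLength R M) : ∃ k : ℕ, kd R M = (k : ℕ∞) := by
  induction h with
  | of_subsingleton => exact ⟨0, kd_subsingleton⟩
  | @of_simple_quotient M _ _ N _ hN ih =>
      obtain ⟨k, hk⟩ := ih
      refine ⟨k + 1, ?_⟩
      have h1 : kd R N ≠ ⊤ := by rw [hk]; intro h; exact (ENat.coe_ne_top k) (WithBot.coe_injective (h.trans (by rfl)))
      have h2 : kd R (M ⧸ N) ≠ ⊤ := by rw [kd_simple]; intro h; exact (by simp : (1:ℕ∞) ≠ ⊤) (WithBot.coe_injective (h.trans (by rfl)))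
      rw [kd_add N h1 h2, hk, kd_simple]
      push_cast
      rfl
end Mod

section LenN
variable {R M N : Type*} [CommRing R] [AddCommGroup M] [Module R M] [AddCommGroup N] [Module R N]

lemma lenN_eq_of_kd {k : ℕ} (h : kd R M = ((k : ℕ∞) : WithBot ℕ∞)) : lenN R M = k := by
  rw [lenN, show krullDim (Submodule R M) = kd R M from rfl, h]
  simp

lemma kd_eq_lenN [IsNoetherian R M] [IsArtinian R M] :
    kd R M = ((lenN R M : ℕ∞) : WithBot ℕ∞) := by
  obtain ⟨k, hk⟩ := exists_kd_nat (R := R) (M := M)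
    (isFiniteLength_iff_isNoetherian_isArtinian.mpr ⟨‹_›, ‹_›⟩)
  rw [lenN_eq_of_kd hk, hk]

lemma lenN_congr (e : M ≃ₗ[R] N) : lenN R M = lenN R N := by
  have h := kd_congr e
  rw [kd, kd] at h
  rw [lenN, lenN, h]

lemma lenN_subsingleton [Subsingleton M] : lenN R M = 0 :=
  lenN_eq_of_kd (by rw [kd_subsingleton]; rfl)

lemma lenN_add [IsNoetherian R M] [IsArtinian R M] (P : Submodule R M) :
    lenN R M = lenN R P + lenN R (M ⧸ P) := by
  have h1 : kd R P = ((lenN R P : ℕ∞) : WithBot ℕ∞) := kd_eq_lenN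
  have h2 : kd R (M ⧸ P) = ((lenN R (M ⧸ P) : ℕ∞) : WithBot ℕ∞) := kd_eq_lenN
  apply lenN_eq_of_kd
  rw [kd_add P (by rw [h1]; intro h; exact (ENat.coe_ne_top _) (WithBot.coe_injective (h.trans (by rfl)))) (by rw [h2]; intro h; exact (ENat.coe_ne_top _) (WithBot.coe_injective (h.trans (by rfl)))), h1, h2]
  push_cast
  rfl

lemma lenN_le (f : M →ₗ[R] N) (hf : Function.Injective f)
    [IsNoetherian R N] [IsArtinian R N] : lenN R M ≤ lenN R N := by
  haveI : IsNoetherian R M := isNoetherian_of_injective f hf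
  haveI : IsArtinian R M := isArtinian_of_injective f hf
  have hmap : StrictMono (Submodule.map f) :=
    Monotone.strictMono_of_injective (fun _ _ h => Submodule.map_mono h)
      (Submodule.map_injective_of_injective hf)
  have hle : kd R M ≤ kd R N := krullDim_le_of_strictMono _ hmap
  rw [kd_eq_lenN, kd_eq_lenN, WithBot.coe_le_coe, Nat.cast_le] at hle
  exact hle

lemma lenN_exact [IsNoetherian R M] [IsArtinian R M] (f : M →ₗ[R] N) :
    lenN R M = lenN R (LinearMap.ker f) + lenN R (LinearMap.range f) := by
  rw [lenN_add (LinearMap.ker f), lenN_congr (f.quotKerEquivRange)]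

end LenN

section PiLen
variable (R : Type*) [CommRing R] [IsNoetherianRing R] [IsArtinianRing R]

/-- Kernel of evaluation at `0` is isomorphic to functions on the tail. -/
noncomputable def kerProjEquiv (k : ℕ) :
    (LinearMap.ker (LinearMap.proj (R := R) (φ := fun _ : Fin (k + 1) => R) 0)) ≃ₗ[R]
      (Fin k → R) where
  toFun x := fun j => x.1 j.succ
  map_add' x y := rfl
  map_smul' c x := rfl
  invFun w := ⟨Fin.cons 0 w, by simp [LinearMap.mem_ker]⟩
  left_inv x := by
    ext j
    refine Fin.cases ?_ ?_ j
    · simp only [Fin.cons_zero]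
      exact (LinearMap.mem_ker.mp x.2).symm
    · intro i; simp
  right_inv w := by ext j; simp

lemma lenN_pi (k : ℕ) : lenN R (Fin k → R) = k * lenN R R := by
  induction k with
  | zero => simpa using lenN_subsingleton
  | succ k ih =>
      have hproj : Function.Surjective (LinearMap.proj (R := R) (φ := fun _ : Fin (k+1) => R) 0) :=
        fun r => ⟨Fin.cons r 0, rfl⟩
      rw [lenN_exact (LinearMap.proj (R := R) (φ := fun _ : Fin (k+1) => R) 0),
        lenN_congr (kerProjEquiv R k), ih,
        LinearMap.range_eq_top.mpr hproj, lenN_congr (Submodule.topEquiv)]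
      ring

lemma lenN_pos [Nontrivial R] : 1 ≤ lenN R R := by
  have hbt : (⊥ : Submodule R R) < ⊤ := by
    refine lt_top_iff_ne_top.mpr ?_
    intro h
    have : (1 : R) ∈ (⊥ : Submodule R R) := h ▸ Submodule.mem_top
    exact one_ne_zero (Submodule.mem_bot R |>.mp this)
  have h1 : (1 : WithBot ℕ∞) ≤ kd R R := by
    refine le_iSup_of_le ⟨1, ![⊥, ⊤], fun i => ?_⟩ (by simp)
    fin_cases i
    simpa using hbt
  rw [kd_eq_lenN] at h1
  exact_mod_cast h1

end PiLen

section Hopkins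
variable {R : Type*} [CommRing R]

/-- Submodules over `R` and over `R ⧸ I` agree for modules killed by `I`. -/
def torsionOrderIso {M : Type*} [AddCommGroup M] [Module R M] (I : Ideal R)
    (hM : Module.IsTorsionBySet R M I) :
    letI := hM.module
    Submodule (R ⧸ I) M ≃o Submodule R M :=
  letI := hM.module
  { toFun := fun p => Submodule.restrictScalars R p
    invFun := fun p =>
      { carrier := p
        add_mem' := fun h1 h2 => p.add_mem h1 h2
        zero_mem' := p.zero_mem
        smul_mem' := by
          rintro ⟨c⟩ x hx
          exact (p.smul_mem c hx : _) }
    left_inv := fun p => rfl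
    right_inv := fun p => rfl
    map_rel_iff' := Iff.rfl }

lemma isNoetherian_of_torsionBy_maximalIdeal [IsLocalRing R] {M : Type*} [AddCommGroup M]
    [Module R M] [IsArtinian R M] (hM : Module.IsTorsionBySet R M (maximalIdeal R)) :
    IsNoetherian R M := by
  letI := hM.module
  letI : Field (R ⧸ maximalIdeal R) := Ideal.Quotient.field _
  let e := torsionOrderIso (maximalIdeal R) hM
  haveI : IsArtinian (R ⧸ maximalIdeal R) M := by
    rw [isArtinian_iff]
    refine Subrelation.wf ?_ (InvImage.wf e ((isArtinian_iff R M).mp ‹_›))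
    intro p q h
    exact e.strictMono h
  haveI : IsNoetherian (R ⧸ maximalIdeal R) M :=
    (IsSemisimpleModule.finite_tfae.out 2 1).mp ‹_›
  rw [isNoetherian_iff']
  constructor
  refine Subrelation.wf ?_ (InvImage.wf e.symm
    ((IsNoetherian.wellFoundedGT ‹IsNoetherian (R ⧸ maximalIdeal R) M›).wf))
  intro p q h
  exact e.symm.strictMono h

lemma isNoetherian_of_pow_smul_eq_bot [IsLocalRing R] (k : ℕ) {M : Type*} [AddCommGroup M]
    [Module R M] [IsArtinian R M]
    (hbot : (maximalIdeal R) ^ k • (⊤ : Submodule R M) = ⊥) : IsNoetherian R M := by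
  induction k generalizing M with
  | zero =>
      rw [pow_zero, Ideal.one_eq_top, Submodule.top_smul] at hbot
      haveI : Subsingleton M := by
        constructor
        intro a b
        have ha : a ∈ (⊥ : Submodule R M) := hbot ▸ Submodule.mem_top
        have hb : b ∈ (⊥ : Submodule R M) := hbot ▸ Submodule.mem_top
        rw [Submodule.mem_bot] at ha hb
        rw [ha, hb]
      infer_instance
  | succ k ih =>
      set N : Submodule R M := (maximalIdeal R) • ⊤ with hN
      haveI hNoethN : IsNoetherian R N := by
        apply ih
        apply Submodule.map_injective_of_injective (Submodule.injective_subtype N)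
        rw [Submodule.map_smul'', Submodule.map_bot, Submodule.map_top, Submodule.range_subtype,
          hN, ← Submodule.smul_assoc, Ideal.smul_eq_mul, ← pow_succ]
        exact hbot
      haveI hNoethQ : IsNoetherian R (M ⧸ N) :=
        isNoetherian_of_torsionBy_maximalIdeal
          (Module.isTorsionBySet_quotient_ideal_smul M (maximalIdeal R))
      exact (isNoetherian_iff_submodule_quotient N).mpr ⟨hNoethN, hNoethQ⟩

lemma isNoetherianRing_of_isArtinianRing_local [IsLocalRing R] [IsArtinianRing R] :
    IsNoetherianRing R := by
  obtain ⟨k, hk⟩ := IsArtinianRing.isNilpotent_jacobson_bot (R := R)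
  rw [IsLocalRing.jacobson_eq_maximalIdeal ⊥ bot_ne_top] at hk
  apply isNoetherian_of_pow_smul_eq_bot k
  rw [Ideal.smul_eq_mul, Ideal.mul_top, hk]; rfl

end Hopkins

end Stmt17Aux

namespace Stmt17Aux

lemma wt_le {R : Type*} [CommRing R] {n : ℕ} {v : Fin n → R} {B : Finset (Fin n)}
    (h : ∀ i, i ∉ B → v i = 0) : wt v ≤ B.card := by
  classical
  apply Finset.card_le_card
  intro i hi
  by_contra hB
  exact (Finset.mem_filter.mp hi).2 (h i hB)

lemma dH_le_wt {R : Type*} [CommRing R] {n : ℕ} {C : Submodule R (Fin n → R)} {v : Fin n → R}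
    (hv : v ∈ C) (h0 : v ≠ 0) : dH C ≤ wt v :=
  Nat.sInf_le ⟨v, hv, h0, rfl⟩

lemma dH_spec {R : Type*} [CommRing R] {n : ℕ} {C : Submodule R (Fin n → R)} (hC : C ≠ ⊥) :
    1 ≤ dH C ∧ dH C ≤ n := by
  classical
  obtain ⟨v, hv, h0⟩ := (Submodule.ne_bot_iff C).mp hC
  have hne : {w : ℕ | ∃ v ∈ C, v ≠ 0 ∧ wt v = w}.Nonempty := ⟨wt v, v, hv, h0, rfl⟩
  obtain ⟨u, hu, hu0, huw⟩ := Nat.sInf_mem hne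
  have hd : dH C = wt u := huw.symm
  constructor
  · obtain ⟨i, hi⟩ := Function.ne_iff.mp hu0
    have : 0 < wt u := Finset.card_pos.mpr
      ⟨i, Finset.mem_filter.mpr ⟨Finset.mem_univ i, hi⟩⟩
    omega
  · have : wt u ≤ n := by
      have h1 : wt u ≤ (Finset.univ : Finset (Fin n)).card := Finset.card_filter_le _ _
      simpa using h1
    omega

end Stmt17Aux

/-- C is MDS iff λ(C(A)) = max{0, |A| − d + 1}·λ(R) for every A ⊆ [n],
where d = d_H(C) (note max{0, |A| − d + 1} = |A| + 1 − d as truncated subtraction). -/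
theorem stmt17 (R : Type*) [CommRing R] [IsLocalRing R] [IsArtinianRing R]
    {n : ℕ} (C : Submodule R (Fin n → R)) (hC : C ≠ ⊥) :
    lenN R C = (n - dH C + 1) * lenN R R ↔
      ∀ A : Finset (Fin n),
        lenN R ↥(C ⊓ suppCode R A) = (A.card + 1 - dH C) * lenN R R := by
  classical
  open Stmt17Aux in
  haveI : IsNoetherianRing R := isNoetherianRing_of_isArtinianRing_local
  obtain ⟨hd1, hdn⟩ := Stmt17Aux.dH_spec hC
  have key : ∀ A : Finset (Fin n), lenN R C = (n - dH C + 1) * lenN R R →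
      lenN R ↥(C ⊓ suppCode R A) = (A.card + 1 - dH C) * lenN R R := by
    intro A hlen
    by_cases hcase : A.card < dH C
    · have hbot : C ⊓ suppCode R A = ⊥ := by
        rw [eq_bot_iff]
        intro v hv
        obtain ⟨hv1, hv2⟩ := Submodule.mem_inf.mp hv
        rw [Submodule.mem_bot]
        by_contra h0
        have h1 := Stmt17Aux.dH_le_wt hv1 h0
        have h2 : wt v ≤ A.card := Stmt17Aux.wt_le (fun i hi => hv2 i hi)
        omega
      rw [hbot, show A.card + 1 - dH C = 0 from by omega, zero_mul]
      exact Stmt17Aux.lenN_subsingleton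
    · push_neg at hcase
      have hmn : A.card ≤ n := by
        have := Finset.card_le_univ A
        simpa using this
      -- upper bound
      obtain ⟨B, hBA, hBc⟩ := Finset.exists_subset_card_eq
        (show dH C - 1 ≤ A.card from by omega)
      have hcardAB : Fintype.card ↥(A \ B : Finset (Fin n)) = A.card + 1 - dH C := by
        rw [Fintype.card_coe, Finset.card_sdiff_of_subset hBA, hBc]
        omega
      let e1 : ↥(A \ B : Finset (Fin n)) ≃ Fin (A.card + 1 - dH C) :=
        Fintype.equivFinOfCardEq hcardAB
      let f1 : ↥(C ⊓ suppCode R A) →ₗ[R] (Fin (A.card + 1 - dH C) → R) :=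
        { toFun := fun v i => (v : Fin n → R) ((e1.symm i : ↥(A \ B)) : Fin n)
          map_add' := fun x y => rfl
          map_smul' := fun c x => rfl }
      have hf1 : Function.Injective f1 := by
        rw [← LinearMap.ker_eq_bot, eq_bot_iff]
        rintro ⟨v, hv⟩ hker
        obtain ⟨hv1, hv2⟩ := Submodule.mem_inf.mp hv
        have hzero : ∀ i, i ∉ B → v i = 0 := by
          intro i hiB
          by_cases hiA : i ∈ A
          · have hmem : i ∈ A \ B := Finset.mem_sdiff.mpr ⟨hiA, hiB⟩
            have h3 := congrFun (LinearMap.mem_ker.mp hker) (e1 ⟨i, hmem⟩)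
            simpa [f1] using h3
          · exact hv2 i hiA
        have hv0 : v = 0 := by
          by_contra h0
          have h4 := Stmt17Aux.dH_le_wt hv1 h0
          have h5 := Stmt17Aux.wt_le hzero
          omega
        rw [Submodule.mem_bot]
        exact Subtype.ext hv0
      have hupper : lenN R ↥(C ⊓ suppCode R A) ≤ (A.card + 1 - dH C) * lenN R R := by
        have h6 := Stmt17Aux.lenN_le f1 hf1
        rwa [show lenN R (Fin (A.card + 1 - dH C) → R)
          = (A.card + 1 - dH C) * lenN R R from Stmt17Aux.lenN_pi R _] at h6
      -- lower bound
      have hcardc : Fintype.card ↥((Aᶜ : Finset (Fin n))) = n - A.card := by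
        rw [Fintype.card_coe, Finset.card_compl]
        simp
      let e2 : ↥((Aᶜ : Finset (Fin n))) ≃ Fin (n - A.card) := Fintype.equivFinOfCardEq hcardc
      let g : ↥C →ₗ[R] (Fin (n - A.card) → R) :=
        { toFun := fun v i => (v : Fin n → R) ((e2.symm i : ↥(Aᶜ : Finset (Fin n))) : Fin n)
          map_add' := fun x y => rfl
          map_smul' := fun c x => rfl }
      let eker : ↥(LinearMap.ker g) ≃ₗ[R] ↥(C ⊓ suppCode R A) :=
        { toFun := fun x => ⟨(x : ↥C), Submodule.mem_inf.mpr ⟨(x : ↥C).2, by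
            intro i hi
            have h7 : ((x : ↥C) : Fin n → R)
                (((e2.symm (e2 ⟨i, Finset.mem_compl.mpr hi⟩)) : ↥((Aᶜ : Finset (Fin n)))) : Fin n)
                = 0 := congrFun (LinearMap.mem_ker.mp x.2) _
            rw [Equiv.symm_apply_apply] at h7
            exact h7⟩⟩
          map_add' := fun x y => rfl
          map_smul' := fun c x => rfl
          invFun := fun y => ⟨⟨(y : Fin n → R), (Submodule.mem_inf.mp y.2).1⟩, by
            rw [LinearMap.mem_ker]
            funext i
            exact (Submodule.mem_inf.mp y.2).2 _ (Finset.mem_compl.mp (e2.symm i).2)⟩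
          left_inv := fun x => by ext; rfl
          right_inv := fun y => by ext; rfl }
      have hex : lenN R ↥C = lenN R ↥(LinearMap.ker g) + lenN R ↥(LinearMap.range g) :=
        Stmt17Aux.lenN_exact g
      have hlenker : lenN R ↥(LinearMap.ker g) = lenN R ↥(C ⊓ suppCode R A) :=
        Stmt17Aux.lenN_congr eker
      have hrange : lenN R ↥(LinearMap.range g) ≤ (n - A.card) * lenN R R := by
        have h8 := Stmt17Aux.lenN_le (LinearMap.range g).subtype (Submodule.injective_subtype _)
        rwa [show lenN R (Fin (n - A.card) → R)
          = (n - A.card) * lenN R R from Stmt17Aux.lenN_pi R _] at h8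
      rw [hlen, hlenker] at hex
      have hsum : (A.card + 1 - dH C) * lenN R R + (n - A.card) * lenN R R ≤
          lenN R ↥(C ⊓ suppCode R A) + (n - A.card) * lenN R R := by
        rw [← add_mul, show A.card + 1 - dH C + (n - A.card) = n - dH C + 1 from by omega,
          hex]
        exact add_le_add_right hrange _
      have hlower : (A.card + 1 - dH C) * lenN R R ≤ lenN R ↥(C ⊓ suppCode R A) :=
        Nat.add_le_add_iff_right.mp hsum
      exact le_antisymm hupper hlower
  constructor
  · intro h A
    exact key A h
  · intro h
    have h9 := h Finset.univ
    have hsupp : suppCode R (Finset.univ : Finset (Fin n)) = ⊤ := by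
      rw [eq_top_iff]
      intro v _ i hi
      exact absurd (Finset.mem_univ i) hi
    rw [hsupp, inf_top_eq] at h9
    rw [h9, show (Finset.univ : Finset (Fin n)).card = n from by simp,
      show n + 1 - dH C = n - dH C + 1 from by omega]
end

section
/- Let R be a finite local Artinian ring with residue field of size q, and C ⊆ R^n a submodule. Then L_C(x, y, q) = W_C(x + y, y), where L_C(x,y,z) = Σ_{A ⊆ [n]} z^{λ(C(A))} x^{n−|A|} y^{|A|} and W_C(x,y) = Σ_i A_i^C x^{n−i} y^i with A_i^C the number of codewords of Hamming weight i. -/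
open IsLocalRing

section CardLen
variable {R : Type*} [CommRing R] [IsLocalRing R]

lemma card_of_simple (M : Type*) [AddCommGroup M] [Module R M] [IsSimpleModule R M] :
    Nat.card M = Nat.card (R ⧸ maximalIdeal R) := by
  obtain ⟨I, hI, ⟨e⟩⟩ := isSimpleModule_iff_quot_maximal.mp ‹IsSimpleModule R M›
  rw [IsLocalRing.eq_maximalIdeal hI] at e
  exact Nat.card_congr e.toEquiv

lemma q_le_card (M : Type*) [AddCommGroup M] [Module R M] [Finite M] [Nontrivial M] :
    Nat.card (R ⧸ maximalIdeal R) ≤ Nat.card M := by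
  obtain ⟨A, hA⟩ := IsAtomic.exists_atom (Submodule R M)
  have : IsSimpleModule R A := isSimpleModule_iff_isAtom.mpr hA
  rw [← card_of_simple (R := R) A]
  exact Nat.card_le_card_of_injective _ Subtype.val_injective

variable {M : Type*} [AddCommGroup M] [Module R M]

lemma card_covby [Finite M] {A B : Submodule R M} (h : A ⋖ B) :
    Nat.card B = Nat.card A * Nat.card (R ⧸ maximalIdeal R) := by
  have hle := h.le
  have hs : IsSimpleModule R (↥B ⧸ A.comap B.subtype) := (covBy_iff_quot_is_simple hle).mp h
  haveI : Finite (↥B ⧸ A.comap B.subtype) :=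
    Finite.of_surjective _ (Submodule.Quotient.mk_surjective (A.comap B.subtype))
  rw [Submodule.card_eq_card_quotient_mul_card (A.comap B.subtype),
    card_of_simple (R := R) (↥B ⧸ A.comap B.subtype),
    Nat.card_congr (Submodule.comapSubtypeEquivOfLe hle).toEquiv]

lemma card_lt_step [Finite M] {A B : Submodule R M} (h : A < B) :
    Nat.card A * Nat.card (R ⧸ maximalIdeal R) ≤ Nat.card B := by
  have hle := h.le
  have hnt : Nontrivial (↥B ⧸ A.comap B.subtype) := by
    refine Submodule.Quotient.nontrivial_iff.mpr (LT.lt.ne ?_)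
    refine lt_top_iff_ne_top.mpr fun hc => h.ne (le_antisymm hle fun b hb => ?_)
    have hm : (⟨b, hb⟩ : B) ∈ A.comap B.subtype := hc ▸ Submodule.mem_top
    simpa using hm
  haveI : Finite (↥B ⧸ A.comap B.subtype) :=
    Finite.of_surjective _ (Submodule.Quotient.mk_surjective (A.comap B.subtype))
  rw [Submodule.card_eq_card_quotient_mul_card (A.comap B.subtype),
    Nat.card_congr (Submodule.comapSubtypeEquivOfLe hle).toEquiv]
  exact Nat.mul_le_mul_left _ (q_le_card _)

end CardLen

lemma card_eq_q_pow_lenN (R : Type*) [CommRing R] [IsLocalRing R] [Fintype R]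
    (M : Type*) [AddCommGroup M] [Module R M] [Finite M] :
    Nat.card M = Nat.card (R ⧸ maximalIdeal R) ^ lenN R M := by
  set q := Nat.card (R ⧸ maximalIdeal R) with hqdef
  haveI : Finite (R ⧸ maximalIdeal R) :=
    Finite.of_surjective _ (Submodule.Quotient.mk_surjective (maximalIdeal R))
  haveI : Nontrivial (R ⧸ maximalIdeal R) :=
    Submodule.Quotient.nontrivial_iff.mpr (LT.lt.ne (lt_top_iff_ne_top.mpr
      (Ideal.IsMaximal.ne_top inferInstance)))
  have hq1 : 1 < q := Finite.one_lt_card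
  obtain ⟨s, hhead, hlast⟩ := exists_compositionSeries_of_isNoetherian_isArtinian R M
  have hcard : ∀ i : Fin (s.length + 1), Nat.card (s i) = q ^ (i : ℕ) := by
    intro i
    induction i using Fin.induction with
    | zero =>
      have h0 : s 0 = ⊥ := hhead
      rw [h0]
      simp [Nat.card_eq_one_iff_unique]
    | succ i ih =>
      have hstep : s i.castSucc ⋖ s i.succ := s.step i
      rw [card_covby hstep, ih, ← hqdef]
      simp [pow_succ]
  have hM : Nat.card M = q ^ s.length := by
    have := hcard (Fin.last _)
    have hl : s (Fin.last _) = ⊤ := hlast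
    rw [hl] at this
    rw [← Nat.card_congr (Submodule.topEquiv (R := R) (M := M)).toEquiv, this, Fin.val_last]
  have hbound : ∀ p : LTSeries (Submodule R M), p.length ≤ s.length := by
    intro p
    have h1 : ∀ i : Fin (p.length + 1), q ^ (i : ℕ) ≤ Nat.card (p i) := by
      intro i
      induction i using Fin.induction with
      | zero =>
        simp only [Fin.val_zero, pow_zero]
        exact Nat.card_pos
      | succ i ih =>
        calc q ^ ((i : ℕ) + 1) = q ^ (i : ℕ) * q := pow_succ _ _
          _ ≤ Nat.card (p i.castSucc) * q := Nat.mul_le_mul_right _ ih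
          _ ≤ Nat.card (p i.succ) := card_lt_step (p.step i)
    have h2 : q ^ p.length ≤ q ^ s.length := by
      calc q ^ p.length ≤ Nat.card (p (Fin.last _)) := by
            simpa using h1 (Fin.last _)
        _ ≤ Nat.card M := Nat.card_le_card_of_injective _ Subtype.val_injective
        _ = q ^ s.length := hM
    exact (Nat.pow_le_pow_iff_right hq1).mp h2
  have hkd : Order.krullDim (Submodule R M) = ((s.length : ℕ∞) : WithBot ℕ∞) := by
    apply le_antisymm
    · rw [Order.krullDim_eq_iSup_length]
      exact WithBot.coe_le_coe.mpr (iSup_le fun p => Nat.cast_le.mpr (hbound p))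
    · exact Order.LTSeries.length_le_krullDim
        (⟨s.length, fun i => s i, fun i => s.lt_succ i⟩ : LTSeries (Submodule R M))
  have hlen : lenN R M = s.length := by
    rw [lenN, hkd]
    simp
  rw [hlen, hM]

lemma binom_subsets {S : Type*} [CommRing S] (x y : S) {ι : Type*} [DecidableEq ι]
    (t : Finset ι) :
    ∑ B ∈ t.powerset, x ^ (t.card - B.card) * y ^ B.card = (x + y) ^ t.card := by
  have h := Finset.prod_add (fun _ : ι => y) (fun _ : ι => x) t
  simp only [Finset.prod_const] at h
  rw [add_comm x y, h]
  refine Finset.sum_congr rfl fun B hB => ?_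
  rw [Finset.mem_powerset] at hB
  rw [Finset.card_sdiff_of_subset hB, mul_comm]

lemma innerSum18 {S : Type*} [CommRing S] (x y : S) {n : ℕ} (s : Finset (Fin n)) :
    ∑ A ∈ Finset.univ.filter (fun A : Finset (Fin n) => s ⊆ A),
        x ^ (n - A.card) * y ^ A.card
      = y ^ s.card * (x + y) ^ (n - s.card) := by
  classical
  have hsn : s.card ≤ n := by simpa using s.card_le_univ
  have step : ∑ A ∈ Finset.univ.filter (fun A : Finset (Fin n) => s ⊆ A),
        x ^ (n - A.card) * y ^ A.card
      = ∑ B ∈ sᶜ.powerset, y ^ s.card * (x ^ ((n - s.card) - B.card) * y ^ B.card) := by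
    refine Finset.sum_nbij' (fun A => A \ s) (fun B => B ∪ s) ?_ ?_ ?_ ?_ ?_
    · intro A hA
      rw [Finset.mem_filter] at hA
      rw [Finset.mem_powerset]
      intro i hi
      rw [Finset.mem_sdiff] at hi
      exact Finset.mem_compl.mpr hi.2
    · intro B hB
      simp only [Finset.mem_filter, Finset.mem_univ, true_and]
      exact Finset.subset_union_right
    · intro A hA
      rw [Finset.mem_filter] at hA
      exact Finset.sdiff_union_of_subset hA.2
    · intro B hB
      rw [Finset.mem_powerset] at hB
      refine Finset.union_sdiff_cancel_right ?_
      exact Finset.disjoint_left.mpr fun a haB haS => Finset.mem_compl.mp (hB haB) haS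
    · intro A hA
      rw [Finset.mem_filter] at hA
      have h1 : (A \ s).card + s.card = A.card := Finset.card_sdiff_add_card_eq_card hA.2
      have hAn : A.card ≤ n := by simpa using A.card_le_univ
      have h2 : n - A.card = (n - s.card) - (A \ s).card := by omega
      have h3 : A.card = (A \ s).card + s.card := h1.symm
      rw [h2, h3, pow_add]
      ring
  rw [step, ← Finset.mul_sum]
  congr 1
  have hc : sᶜ.card = n - s.card := by
    rw [Finset.card_compl]
    simp
  rw [← hc]
  exact binom_subsets x y sᶜ

/-- over a finite local Artinian ring with |K| = q, the length enumerator
and weight enumerator satisfy L_C(x, y, q) = W_C(x + y, y), as polynomials in x, y. -/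
theorem stmt18 (R : Type*) [CommRing R] [IsLocalRing R] [IsArtinianRing R] [Fintype R]
    {n : ℕ} (C : Submodule R (Fin n → R))
    (S : Type*) [CommRing S] (x y : S) :
    ∑ A : Finset (Fin n),
        (Nat.card (R ⧸ maximalIdeal R) : S) ^ lenN R ↥(C ⊓ suppCode R A) *
          x ^ (n - A.card) * y ^ A.card
      = ∑ i ∈ Finset.range (n + 1),
          (Nat.card {v : C // wt (v : Fin n → R) = i} : S) * (x + y) ^ (n - i) * y ^ i := by
  classical
  haveI : Fintype C := Fintype.ofFinite _
  set suppF : C → Finset (Fin n) :=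
    fun v => Finset.univ.filter (fun i => (v : Fin n → R) i ≠ 0) with hsuppF
  have wt_eq : ∀ v : C, wt (v : Fin n → R) = (suppF v).card := by
    intro v
    rw [wt, hsuppF]
  have card_le : ∀ v : C, (suppF v).card ≤ n := by
    intro v
    simpa using (suppF v).card_le_univ
  -- cardinality of C(A)
  have hcardA : ∀ A : Finset (Fin n),
      Nat.card ↥(C ⊓ suppCode R A)
        = (Finset.univ.filter (fun v : C => suppF v ⊆ A)).card := by
    intro A
    have e : ↥(C ⊓ suppCode R A) ≃ {v : C // suppF v ⊆ A} := by
      refine ⟨fun w => ⟨⟨w.1, (Submodule.mem_inf.mp w.2).1⟩, ?_⟩,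
        fun v => ⟨v.1.1, Submodule.mem_inf.mpr ⟨v.1.2, ?_⟩⟩,
        fun w => rfl, fun v => rfl⟩
      · intro i hi
        simp only [hsuppF, Finset.mem_filter, Finset.mem_univ, true_and] at hi
        by_contra hiA
        exact hi ((Submodule.mem_inf.mp w.2).2 i hiA)
      · intro i hiA
        by_contra h0
        exact hiA (v.2 (by simp [hsuppF, Finset.mem_filter, h0]))
    rw [Nat.card_congr e, Nat.card_eq_fintype_card, Fintype.card_subtype]
  have key : ∀ A : Finset (Fin n),
      (Nat.card (R ⧸ maximalIdeal R) : S) ^ lenN R ↥(C ⊓ suppCode R A)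
        = ((Finset.univ.filter (fun v : C => suppF v ⊆ A)).card : ℕ) := by
    intro A
    rw [← Nat.cast_pow, ← card_eq_q_pow_lenN R ↥(C ⊓ suppCode R A), hcardA A]
  calc
    ∑ A : Finset (Fin n),
        (Nat.card (R ⧸ maximalIdeal R) : S) ^ lenN R ↥(C ⊓ suppCode R A) *
          x ^ (n - A.card) * y ^ A.card
      = ∑ A : Finset (Fin n), ∑ v : C,
          (if suppF v ⊆ A then x ^ (n - A.card) * y ^ A.card else 0) := by
        refine Finset.sum_congr rfl fun A _ => ?_
        rw [key A, Finset.card_filter, Nat.cast_sum, Finset.sum_mul, Finset.sum_mul]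
        refine Finset.sum_congr rfl fun v _ => ?_
        split_ifs <;> simp [mul_assoc]
    _ = ∑ v : C, ∑ A : Finset (Fin n),
          (if suppF v ⊆ A then x ^ (n - A.card) * y ^ A.card else 0) := Finset.sum_comm
    _ = ∑ v : C, y ^ (suppF v).card * (x + y) ^ (n - (suppF v).card) := by
        refine Finset.sum_congr rfl fun v _ => ?_
        rw [← Finset.sum_filter]
        exact innerSum18 x y (suppF v)
    _ = ∑ i ∈ Finset.range (n + 1), ∑ v ∈ Finset.univ.filter (fun v : C => (suppF v).card = i),
          y ^ (suppF v).card * (x + y) ^ (n - (suppF v).card) :=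
        (Finset.sum_fiberwise_of_maps_to
          (fun v _ => Finset.mem_range.mpr (Nat.lt_succ_of_le (card_le v))) _).symm
    _ = ∑ i ∈ Finset.range (n + 1),
          (Nat.card {v : C // wt (v : Fin n → R) = i} : S) * (x + y) ^ (n - i) * y ^ i := by
        refine Finset.sum_congr rfl fun i _ => ?_
        have hfil : Finset.univ.filter (fun v : C => (suppF v).card = i)
            = Finset.univ.filter (fun v : C => wt (v : Fin n → R) = i) := by
          refine Finset.filter_congr fun v _ => ?_
          rw [wt_eq v]
        have hcard : Nat.card {v : C // wt (v : Fin n → R) = i}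
            = (Finset.univ.filter (fun v : C => wt (v : Fin n → R) = i)).card := by
          rw [Nat.card_eq_fintype_card, Fintype.card_subtype]
        rw [Finset.sum_congr rfl (fun v hv => by
          rw [(Finset.mem_filter.mp hv).2]), Finset.sum_const, hfil, ← hcard, nsmul_eq_mul]
        ring
end
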